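/- arXiv:math/9210226 — 3 statements merged into one kernel-verified Lean document; each statement's English description precedes it below -/
import Mathlib

section
/- Suppose (w, A) is a solution of the Bartnik–McKinnon ODE system (2a)–(2b) on (0, ∞), satisfying the regularity conditions w(0⁺) = 1, w'(0⁺) = 0, A(0⁺) = 1, w''(0⁺) = −λ for some λ > 0, such that possibility (P₂) holds: for all r > 0 one has w(r) > −1, w'(r) < 0 and A(r) > 0. Then the orbit connects the rest points: w(r) → −1 and w'(r) → 0 as r → ∞, and moreover A(r) → 1 as r → ∞. -/
open Set Filter Topology

/-- The function `Φ(r) = r(1 - A(r)) - (1 - w(r)²)²/r` from the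
Bartnik–McKinnon system. -/
noncomputable def Phi (w A : ℝ → ℝ) (r : ℝ) : ℝ :=
  r * (1 - A r) - (1 - (w r) ^ 2) ^ 2 / r

/-- `(w, A)` solves the Bartnik–McKinnon ODE system (2a)–(2b) on the set `s`:
`w` is C², `A` is C¹, and the equations
(2a) `r²·A·w'' + Φ·w' + w(1 - w²) = 0` and
(2b) `r·A' + (1 + 2w'²)·A = 1 - (1 - w²)²/r²`
hold on `s`. -/
def IsBMSolutionOn (w A : ℝ → ℝ) (s : Set ℝ) : Prop :=
  ContDiffOn ℝ 2 w s ∧ ContDiffOn ℝ 1 A s ∧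
  (∀ r ∈ s, r ^ 2 * A r * deriv (deriv w) r + Phi w A r * deriv w r
      + w r * (1 - (w r) ^ 2) = 0) ∧
  (∀ r ∈ s, r * deriv A r + (1 + 2 * (deriv w r) ^ 2) * A r
      = 1 - (1 - (w r) ^ 2) ^ 2 / r ^ 2)

/-- The regularity conditions at the origin:
`w(0⁺) = 1`, `w'(0⁺) = 0`, `A(0⁺) = 1`. -/
def RegularAtOrigin (w A : ℝ → ℝ) : Prop :=
  Tendsto w (𝓝[>] (0 : ℝ)) (𝓝 1) ∧
  Tendsto (deriv w) (𝓝[>] (0 : ℝ)) (𝓝 0) ∧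
  Tendsto A (𝓝[>] (0 : ℝ)) (𝓝 1)

/-- The condition `w''(0⁺) = -λ`. -/
def SecondDerivAtOrigin (w : ℝ → ℝ) (lam : ℝ) : Prop :=
  Tendsto (deriv (deriv w)) (𝓝[>] (0 : ℝ)) (𝓝 (-lam))

private lemma monoOn_of_hasDerivAt {s : Set ℝ} (hs : Convex ℝ s) {f f' : ℝ → ℝ}
    (hd : ∀ r ∈ s, HasDerivAt f (f' r) r) (h0 : ∀ r ∈ interior s, 0 ≤ f' r) :
    MonotoneOn f s :=
  monotoneOn_of_deriv_nonneg hs (fun r hr => (hd r hr).continuousAt.continuousWithinAt)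
    (fun r hr => ((hd r (interior_subset hr)).differentiableAt).differentiableWithinAt)
    (fun r hr => ((hd r (interior_subset hr)).deriv) ▸ h0 r hr)

private lemma antiOn_of_hasDerivAt {s : Set ℝ} (hs : Convex ℝ s) {f f' : ℝ → ℝ}
    (hd : ∀ r ∈ s, HasDerivAt f (f' r) r) (h0 : ∀ r ∈ interior s, f' r ≤ 0) :
    AntitoneOn f s :=
  antitoneOn_of_deriv_nonpos hs (fun r hr => (hd r hr).continuousAt.continuousWithinAt)
    (fun r hr => ((hd r (interior_subset hr)).differentiableAt).differentiableWithinAt)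
    (fun r hr => ((hd r (interior_subset hr)).deriv) ▸ h0 r hr)

private lemma tendsto_of_antitoneOn' {f : ℝ → ℝ} {a c : ℝ}
    (hf : AntitoneOn f (Ici a)) (hc : ∀ r, a ≤ r → c ≤ f r) :
    ∃ L, c ≤ L ∧ (∀ r, a ≤ r → L ≤ f r) ∧ Tendsto f atTop (𝓝 L) := by
  set S := f '' Ici a with hS
  have hne : S.Nonempty := ⟨f a, ⟨a, self_mem_Ici, rfl⟩⟩
  have hbdd : BddBelow S := ⟨c, by rintro x ⟨r, hr, rfl⟩; exact hc r hr⟩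
  refine ⟨sInf S, le_csInf hne (by rintro x ⟨r, hr, rfl⟩; exact hc r hr),
    fun r hr => csInf_le hbdd ⟨r, hr, rfl⟩, ?_⟩
  rw [tendsto_order]
  constructor
  · intro b hb
    filter_upwards [eventually_ge_atTop a] with r hr
    exact lt_of_lt_of_le hb (csInf_le hbdd ⟨r, hr, rfl⟩)
  · intro b hb
    obtain ⟨x, hx, hxb⟩ := exists_lt_of_csInf_lt hne hb
    obtain ⟨r, hr, rfl⟩ := hx
    filter_upwards [eventually_ge_atTop r, eventually_ge_atTop a] with t ht hta
    exact lt_of_le_of_lt (hf hr hta ht) hxb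

set_option maxHeartbeats 2000000 in
/-- **Possibility (P₂) gives a connecting orbit.** If `(w, A)` solves
(2a)–(2b) on `(0, ∞)` with the regularity conditions and `w''(0⁺) = -λ`,
`λ > 0`, and for all `r > 0` one has `w(r) > -1`, `w'(r) < 0`, `A(r) > 0`,
then `w → -1`, `w' → 0` and `A → 1` as `r → ∞`. -/
theorem stmt7 (lam : ℝ) (hlam : 0 < lam) (w A : ℝ → ℝ)
    (hsol : IsBMSolutionOn w A (Ioi 0))
    (hreg : RegularAtOrigin w A)
    (hsecond : SecondDerivAtOrigin w lam)
    (hP2 : ∀ r : ℝ, 0 < r → -1 < w r ∧ deriv w r < 0 ∧ 0 < A r) :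
    Tendsto w atTop (𝓝 (-1)) ∧
    Tendsto (deriv w) atTop (𝓝 0) ∧
    Tendsto A atTop (𝓝 1) := by
  obtain ⟨hw2, hA1, heq1, heq2⟩ := hsol
  obtain ⟨hw0, -, hA0⟩ := hreg
  simp only [Phi] at heq1
  clear hsecond hlam
  -- pointwise facts
  have hwgt : ∀ r, 0 < r → -1 < w r := fun r hr => (hP2 r hr).1
  have hw'neg : ∀ r, 0 < r → deriv w r < 0 := fun r hr => (hP2 r hr).2.1
  have hApos : ∀ r, 0 < r → 0 < A r := fun r hr => (hP2 r hr).2.2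
  -- differentiability
  have hwD : ∀ r, 0 < r → HasDerivAt w (deriv w r) r := fun r hr =>
    ((hw2.differentiableOn (by norm_num)).differentiableAt (isOpen_Ioi.mem_nhds hr)).hasDerivAt
  have hw'cd : ContDiffOn ℝ 1 (deriv w) (Ioi 0) := hw2.deriv_of_isOpen isOpen_Ioi (by norm_num)
  have hw'D : ∀ r, 0 < r → HasDerivAt (deriv w) (deriv (deriv w) r) r := fun r hr =>
    ((hw'cd.differentiableOn (by norm_num)).differentiableAt (isOpen_Ioi.mem_nhds hr)).hasDerivAt
  have hAD : ∀ r, 0 < r → HasDerivAt A (deriv A r) r := fun r hr =>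
    ((hA1.differentiableOn (by norm_num)).differentiableAt (isOpen_Ioi.mem_nhds hr)).hasDerivAt
  -- key derivative formulas
  have hA'eq : ∀ r, 0 < r → deriv A r
      = (1 - (1 - w r ^ 2) ^ 2 / r ^ 2 - (1 + 2 * (deriv w r) ^ 2) * A r) / r := by
    intro r hr
    rw [eq_div_iff hr.ne']
    linear_combination heq2 r hr
  have hw''eq : ∀ r, 0 < r → deriv (deriv w) r
      = (-((r * (1 - A r) - (1 - (w r) ^ 2) ^ 2 / r) * deriv w r) - w r * (1 - w r ^ 2))
        / (r ^ 2 * A r) := by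
    intro r hr
    rw [eq_div_iff (by have := hApos r hr; positivity)]
    linear_combination heq1 r hr
  -- w strictly decreasing
  have hwsa : StrictAntiOn w (Ioi 0) := by
    refine strictAntiOn_of_deriv_neg (convex_Ioi 0)
      (fun r hr => (hwD r hr).continuousAt.continuousWithinAt) ?_
    rw [interior_Ioi]; exact fun r hr => hw'neg r hr
  have hwle1 : ∀ r, 0 < r → w r ≤ 1 := by
    intro r hr
    refine ge_of_tendsto hw0 ?_
    filter_upwards [Ioo_mem_nhdsGT_of_mem (⟨le_refl (0:ℝ), hr⟩ : (0:ℝ) ∈ Ico 0 r)] with s hs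
    exact (hwsa hs.1 hr hs.2).le
  have hwsq : ∀ r, 0 < r → w r ^ 2 ≤ 1 := by
    intro r hr; nlinarith [hwgt r hr, hwle1 r hr]
  -- B = r*A - r is antitone, nonpositive
  have hBD : ∀ r, 0 < r → HasDerivAt (fun s => s * A s - s)
      (-(2 * (deriv w r) ^ 2 * A r) - (1 - w r ^ 2) ^ 2 / r ^ 2) r := by
    intro r hr
    have h := ((hasDerivAt_id r).mul (hAD r hr)).sub (hasDerivAt_id r)
    simp only [id_eq] at h
    have hv : 1 * A r + r * deriv A r - 1
        = -(2 * (deriv w r) ^ 2 * A r) - (1 - w r ^ 2) ^ 2 / r ^ 2 := by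
      rw [hA'eq r hr]; field_simp; ring
    rwa [hv] at h
  have hBanti : AntitoneOn (fun s => s * A s - s) (Ioi 0) := by
    refine antiOn_of_hasDerivAt (convex_Ioi 0) (fun r hr => hBD r hr) ?_
    rw [interior_Ioi]
    intro r hr
    have h1 : 0 ≤ 2 * (deriv w r) ^ 2 * A r := by have := hApos r hr; positivity
    have h2 : 0 ≤ (1 - w r ^ 2) ^ 2 / r ^ 2 := by positivity
    linarith
  have hB0 : Tendsto (fun s => s * A s - s) (𝓝[>] (0:ℝ)) (𝓝 0) := by
    have hid : Tendsto (fun s : ℝ => s) (𝓝[>] (0:ℝ)) (𝓝 0) :=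
      (continuous_id.tendsto 0).mono_left nhdsWithin_le_nhds
    have := (hid.mul hA0).sub hid
    simpa using this
  have hBle : ∀ r, 0 < r → r * A r - r ≤ 0 := by
    intro r hr
    refine ge_of_tendsto hB0 ?_
    filter_upwards [Ioo_mem_nhdsGT_of_mem (⟨le_refl (0:ℝ), hr⟩ : (0:ℝ) ∈ Ico 0 r)] with s hs
    exact hBanti hs.1 hr hs.2.le
  have hAle1 : ∀ r, 0 < r → A r ≤ 1 := by
    intro r hr
    have := hBle r hr
    nlinarith
  have hm0 : ∀ r, 0 < r → 0 ≤ r * (1 - A r) / 2 := by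
    intro r hr; have := hBle r hr; nlinarith
  -- u = r*A*w' and f = (u-1)/r
  have huD : ∀ r, 0 < r → HasDerivAt (fun s => s * A s * deriv w s)
      ((1 * A r + r * deriv A r) * deriv w r + r * A r * deriv (deriv w) r) r := by
    intro r hr
    have h := (((hasDerivAt_id r).mul (hAD r hr)).mul (hw'D r hr))
    exact h
  have hu'val : ∀ r, 0 < r →
      ((1 * A r + r * deriv A r) * deriv w r + r * A r * deriv (deriv w) r)
      = A r * deriv w r * (1 - 2 * (deriv w r) ^ 2) - w r * (1 - w r ^ 2) / r := by
    intro r hr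
    rw [hA'eq r hr, hw''eq r hr]
    have hA := (hApos r hr).ne'
    field_simp
    ring
  have hfD : ∀ r, 0 < r → HasDerivAt (fun s => (s * A s * deriv w s - 1) / s)
      ((((1 * A r + r * deriv A r) * deriv w r + r * A r * deriv (deriv w) r) * r
        - (r * A r * deriv w r - 1) * 1) / r ^ 2) r := by
    intro r hr
    exact ((huD r hr).sub_const 1).div (hasDerivAt_id r) hr.ne'
  have hfmono : MonotoneOn (fun s => (s * A s * deriv w s - 1) / s) (Ici 1) := by
    refine monoOn_of_hasDerivAt (convex_Ici 1)
      (fun r hr => hfD r (lt_of_lt_of_le one_pos hr)) ?_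
    rw [interior_Ici]
    intro r hr
    have hr0 : (0:ℝ) < r := lt_trans one_pos hr
    rw [hu'val r hr0]
    have h1 : 0 ≤ (A r * deriv w r * (1 - 2 * (deriv w r) ^ 2) - w r * (1 - w r ^ 2) / r) * r
        - (r * A r * deriv w r - 1) * 1 := by
      have hexp : (A r * deriv w r * (1 - 2 * (deriv w r) ^ 2) - w r * (1 - w r ^ 2) / r) * r
          - (r * A r * deriv w r - 1) * 1
          = 2 * r * A r * (-(deriv w r)) ^ 3 + (1 - w r * (1 - w r ^ 2)) := by
        field_simp; ring
      rw [hexp]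
      have h2 : 0 ≤ 2 * r * A r * (-(deriv w r)) ^ 3 := by
        have h3 : 0 < -(deriv w r) := by linarith [hw'neg r hr0]
        have := hApos r hr0
        positivity
      have h4 : 0 ≤ 1 - w r * (1 - w r ^ 2) := by
        nlinarith [mul_nonneg (by linarith [hwgt r hr0] : (0:ℝ) ≤ w r + 1) (sq_nonneg (w r - 1)),
          sq_nonneg (w r), hwle1 r hr0]
      linarith
    positivity
  obtain ⟨K, hKdef⟩ : ∃ K : ℝ, K = 1 - 1 * A 1 * deriv w 1 := ⟨_, rfl⟩
  have hKpos : 1 < K := by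
    have h1 : 1 * A 1 * deriv w 1 < 0 := by
      have := hApos 1 one_pos; have := hw'neg 1 one_pos; nlinarith
    rw [hKdef]; linarith
  have hAw' : ∀ r, 1 ≤ r → -K ≤ A r * deriv w r := by
    intro r hr
    have hr0 : (0:ℝ) < r := lt_of_lt_of_le one_pos hr
    have h := hfmono self_mem_Ici hr hr
    simp only at h
    rw [div_le_div_iff₀ one_pos hr0] at h
    nlinarith [h, hr0, hKdef]
  -- G = m + K*w + (2r)^{-1} is antitone on [1,infty)
  have hGD : ∀ r, 0 < r → HasDerivAt (fun s => s * (1 - A s) / 2 + K * w s + (2*s)⁻¹)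
      ((deriv w r) ^ 2 * A r + (1 - w r ^ 2) ^ 2 / (2 * r ^ 2) + K * deriv w r
        - 1 / (2 * r ^ 2)) r := by
    intro r hr
    have h := ((((hasDerivAt_id r).mul ((hasDerivAt_const r (1:ℝ)).sub (hAD r hr))).div_const
      2).add ((hwD r hr).const_mul K)).add
      (((hasDerivAt_id r).const_mul 2).inv (by positivity))
    simp only [id_eq] at h
    refine h.congr_deriv ?_
    simp only [Pi.sub_apply]
    rw [hA'eq r hr]
    field_simp
    ring
  have hGanti : AntitoneOn (fun s => s * (1 - A s) / 2 + K * w s + (2*s)⁻¹) (Ici 1) := by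
    refine antiOn_of_hasDerivAt (convex_Ici 1)
      (fun r hr => hGD r (lt_of_lt_of_le one_pos hr)) ?_
    rw [interior_Ici]
    intro r hr
    have hr0 : (0:ℝ) < r := lt_trans one_pos hr
    have e1 : (1 - w r ^ 2) ^ 2 ≤ 1 := by nlinarith [hwsq r hr0, sq_nonneg (w r)]
    have e2 : (1 - w r ^ 2) ^ 2 / (2 * r ^ 2) ≤ 1 / (2 * r ^ 2) :=
      (div_le_div_iff_of_pos_right (by positivity)).mpr e1
    have e3 : 0 ≤ (A r * deriv w r + K) * (-(deriv w r)) :=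
      mul_nonneg (by linarith [hAw' r hr.le]) (by linarith [hw'neg r hr0])
    nlinarith [e2, e3]
  obtain ⟨Mb, hMbdef⟩ : ∃ Mb : ℝ, Mb = 1 * (1 - A 1) / 2 + 2 * K + 1/2 := ⟨_, rfl⟩
  have hMb : ∀ r, 1 ≤ r → r * (1 - A r) / 2 ≤ Mb := by
    intro r hr
    have hr0 : (0:ℝ) < r := lt_of_lt_of_le one_pos hr
    have h := hGanti self_mem_Ici hr hr
    simp only at h
    have h1 : (0:ℝ) < (2*r)⁻¹ := by positivity
    have h2 : ((2:ℝ)*1)⁻¹ = 1/2 := by norm_num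
    have h3 : 0 ≤ K * (w r + 1) := mul_nonneg (by linarith) (by linarith [hwgt r hr0])
    have h4 : 0 ≤ K * (1 - w 1) := mul_nonneg (by linarith) (by linarith [hwle1 1 one_pos])
    rw [hMbdef]
    nlinarith [h, h1, h2, h3, h4]
  have hMb0 : 0 ≤ Mb := le_trans (hm0 1 one_pos) (hMb 1 le_rfl)
  -- A tends to 1 at infinity
  have hAlow : ∀ r, 1 ≤ r → 1 - 2 * Mb / r ≤ A r := by
    intro r hr
    have hr0 : (0:ℝ) < r := lt_of_lt_of_le one_pos hr
    have h2 : r * (1 - A r) ≤ 2 * Mb := by linarith [hMb r hr]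
    have h3 : 1 - A r ≤ 2 * Mb / r := by rw [le_div_iff₀ hr0]; linarith
    linarith
  have hAtop : Tendsto A atTop (𝓝 1) := by
    have hlow : Tendsto (fun r : ℝ => 1 - 2 * Mb / r) atTop (𝓝 1) := by
      have h := (tendsto_id : Tendsto (fun r : ℝ => r) atTop atTop).const_div_atTop (2 * Mb)
      simpa using ((tendsto_const_nhds : Tendsto (fun _ : ℝ => (1:ℝ)) atTop (𝓝 1)).sub h)
    refine tendsto_of_tendsto_of_tendsto_of_le_of_le' hlow tendsto_const_nhds ?_ ?_
    · filter_upwards [eventually_ge_atTop (1:ℝ)] with r hr; exact hAlow r hr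
    · filter_upwards [eventually_ge_atTop (1:ℝ)] with r hr
      exact hAle1 r (lt_of_lt_of_le one_pos hr)
  -- threshold where A >= 1/2
  obtain ⟨R₀', hR₀'⟩ := eventually_atTop.mp
    (hAtop.eventually (eventually_ge_nhds (by norm_num : (1:ℝ)/2 < 1)))
  obtain ⟨R₀, hR₀def⟩ : ∃ R₀ : ℝ, R₀ = max R₀' 1 := ⟨_, rfl⟩
  have hR₀1 : (1:ℝ) ≤ R₀ := hR₀def ▸ le_max_right _ _
  have hAhalf : ∀ r, R₀ ≤ r → 1/2 ≤ A r := fun r hr =>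
    hR₀' r (le_trans (le_max_left _ _) (hR₀def ▸ hr))
  -- Phi bound
  obtain ⟨C₀, hC₀def⟩ : ∃ C₀ : ℝ, C₀ = 2 * Mb + 1 := ⟨_, rfl⟩
  have hC₀1 : (1:ℝ) ≤ C₀ := by rw [hC₀def]; linarith
  have hPhiBd : ∀ r, 1 ≤ r → |r * (1 - A r) - (1 - w r ^ 2) ^ 2 / r| ≤ C₀ := by
    intro r hr
    have hr0 : (0:ℝ) < r := lt_of_lt_of_le one_pos hr
    have h1 : 0 ≤ r * (1 - A r) := by linarith [hm0 r hr0]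
    have h2 : r * (1 - A r) ≤ 2 * Mb := by linarith [hMb r hr]
    have h3 : 0 ≤ (1 - w r ^ 2) ^ 2 / r := by positivity
    have h4 : (1 - w r ^ 2) ^ 2 / r ≤ 1 := by
      rw [div_le_one hr0]
      nlinarith [hwsq r hr0, sq_nonneg (w r)]
    rw [abs_le]
    constructor <;> rw [hC₀def] <;> linarith
  -- w' bound
  have hw'bd : ∀ r, R₀ ≤ r → -(2 * K) ≤ deriv w r := by
    intro r hr
    have hr1 : (1:ℝ) ≤ r := le_trans hR₀1 hr
    have hr0 : (0:ℝ) < r := lt_of_lt_of_le one_pos hr1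
    nlinarith [hAw' r hr1, hAhalf r hr, hw'neg r hr0,
      mul_nonneg (by linarith [hAhalf r hr] : (0:ℝ) ≤ A r - 1/2)
        (by linarith [hw'neg r hr0] : (0:ℝ) ≤ -(deriv w r))]
  -- w'' bound
  obtain ⟨C₂, hC₂def⟩ : ∃ C₂ : ℝ, C₂ = 2 * (C₀ * (2 * K) + 1) := ⟨_, rfl⟩
  have hC₂pos : 0 < C₂ := by rw [hC₂def]; nlinarith
  have hw''bd : ∀ r, R₀ ≤ r → |deriv (deriv w) r| ≤ C₂ / r ^ 2 := by
    intro r hr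
    have hr1 : (1:ℝ) ≤ r := le_trans hR₀1 hr
    have hr0 : (0:ℝ) < r := lt_of_lt_of_le one_pos hr1
    have hApr := hApos r hr0
    rw [hw''eq r hr0, abs_div]
    rw [abs_of_pos (by positivity : (0:ℝ) < r ^ 2 * A r)]
    have hnum : |-((r * (1 - A r) - (1 - w r ^ 2) ^ 2 / r) * deriv w r) - w r * (1 - w r ^ 2)|
        ≤ C₂ / 2 := by
      have e2 : |deriv w r| ≤ 2 * K := by
        rw [abs_of_neg (hw'neg r hr0)]; linarith [hw'bd r hr]
      have e1 : |(r * (1 - A r) - (1 - w r ^ 2) ^ 2 / r) * deriv w r| ≤ C₀ * (2 * K) := by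
        rw [abs_mul]
        exact mul_le_mul (hPhiBd r hr1) e2 (abs_nonneg _) (by linarith)
      have e3 : |w r * (1 - w r ^ 2)| ≤ 1 := by
        rw [abs_mul]
        have e4 : |w r| ≤ 1 := abs_le.mpr ⟨by linarith [hwgt r hr0], hwle1 r hr0⟩
        have e5 : |1 - w r ^ 2| ≤ 1 :=
          abs_le.mpr ⟨by nlinarith [hwsq r hr0], by nlinarith [sq_nonneg (w r)]⟩
        calc |w r| * |1 - w r ^ 2| ≤ 1 * 1 :=
              mul_le_mul e4 e5 (abs_nonneg _) one_pos.le
          _ = 1 := by norm_num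
      have heq : -((r * (1 - A r) - (1 - w r ^ 2) ^ 2 / r) * deriv w r) - w r * (1 - w r ^ 2)
          = -(((r * (1 - A r) - (1 - w r ^ 2) ^ 2 / r) * deriv w r) + w r * (1 - w r ^ 2)) := by
        ring
      rw [heq, abs_neg]
      calc |((r * (1 - A r) - (1 - w r ^ 2) ^ 2 / r) * deriv w r) + w r * (1 - w r ^ 2)|
          ≤ |(r * (1 - A r) - (1 - w r ^ 2) ^ 2 / r) * deriv w r| + |w r * (1 - w r ^ 2)| :=
            abs_add_le _ _
        _ ≤ C₀ * (2 * K) + 1 := by linarith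
        _ = C₂ / 2 := by rw [hC₂def]; ring
    calc |-((r * (1 - A r) - (1 - w r ^ 2) ^ 2 / r) * deriv w r) - w r * (1 - w r ^ 2)|
          / (r ^ 2 * A r)
        ≤ (C₂ / 2) / (r ^ 2 * A r) := (div_le_div_iff_of_pos_right (by positivity)).mpr hnum
      _ ≤ (C₂ / 2) / (r ^ 2 / 2) := by
          refine div_le_div_of_nonneg_left (by linarith) (by positivity) ?_
          nlinarith [hAhalf r hr]
      _ = C₂ / r ^ 2 := by field_simp
  have hw''bd' : ∀ r, R₀ ≤ r → |deriv (deriv w) r| ≤ C₂ := by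
    intro r hr
    have hr1 : (1:ℝ) ≤ r := le_trans hR₀1 hr
    refine le_trans (hw''bd r hr) ?_
    refine div_le_self hC₂pos.le ?_
    nlinarith
  -- limit of w at infinity
  have hwanti : AntitoneOn w (Ici 1) := by
    intro a ha b hb hab
    rcases eq_or_lt_of_le hab with rfl | h
    · exact le_rfl
    · exact (hwsa (show a ∈ Ioi (0:ℝ) from mem_Ioi.mpr (lt_of_lt_of_le one_pos ha))
        (show b ∈ Ioi (0:ℝ) from mem_Ioi.mpr (lt_of_lt_of_le one_pos hb)) h).le
  obtain ⟨L, hLm1, hLle, hwL⟩ := tendsto_of_antitoneOn' hwanti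
    (fun r hr => (hwgt r (lt_of_lt_of_le one_pos hr)).le)
  -- w' tends to 0 (Barbalat)
  have hw'0 : Tendsto (deriv w) atTop (𝓝 0) := by
    rw [Metric.tendsto_atTop]
    intro ε hε
    obtain ⟨δ, hδdef⟩ : ∃ δ : ℝ, δ = ε / (2 * C₂) := ⟨_, rfl⟩
    have hδpos : 0 < δ := by rw [hδdef]; positivity
    obtain ⟨R₁, hR₁⟩ := Metric.tendsto_atTop.mp hwL (ε * δ / 2) (by positivity)
    refine ⟨max R₀ R₁, fun r hr => ?_⟩
    have hrR₀ : R₀ ≤ r := le_trans (le_max_left _ _) hr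
    have hrR₁ : R₁ ≤ r := le_trans (le_max_right _ _) hr
    have hr1 : (1:ℝ) ≤ r := le_trans hR₀1 hrR₀
    have hr0 : (0:ℝ) < r := lt_of_lt_of_le one_pos hr1
    rw [Real.dist_eq, sub_zero, abs_of_neg (hw'neg r hr0)]
    by_contra hcon
    push_neg at hcon
    have hstep1 : AntitoneOn (fun s => deriv w s - C₂ * s) (Ici R₀) := by
      refine antiOn_of_hasDerivAt (convex_Ici R₀)
        (fun s hs => (hw'D s (lt_of_lt_of_le one_pos (le_trans hR₀1 hs))).sub
          ((hasDerivAt_id s).const_mul C₂)) ?_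
      rw [interior_Ici]
      intro s hs
      have h := (abs_le.mp (hw''bd' s (le_of_lt hs))).2
      simp only [mul_one]
      linarith
    have hw'le : ∀ s, s ∈ Icc r (r + δ) → deriv w s ≤ -(ε/2) := by
      intro s hs
      have h1 : deriv w s - C₂ * s ≤ deriv w r - C₂ * r :=
        hstep1 (mem_Ici.mpr hrR₀) (mem_Ici.mpr (le_trans hrR₀ hs.1)) hs.1
      have h2 : C₂ * (s - r) ≤ C₂ * δ := by
        nlinarith [mul_nonneg hC₂pos.le (by linarith [hs.2] : (0:ℝ) ≤ r + δ - s)]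
      have h3 : C₂ * δ = ε / 2 := by
        rw [hδdef]; field_simp
      nlinarith [h1, h2, h3, hcon]
    have hanti2 : AntitoneOn (fun s => w s + (ε/2) * s) (Icc r (r + δ)) := by
      refine antiOn_of_hasDerivAt (convex_Icc r (r+δ))
        (fun s hs => (hwD s (lt_of_lt_of_le hr0 hs.1)).add
          ((hasDerivAt_id s).const_mul (ε/2))) ?_
      intro s hs
      have hs' := interior_subset hs
      have := hw'le s hs'
      simp only [mul_one]
      linarith
    have hdrop : w (r + δ) + (ε/2) * (r + δ) ≤ w r + (ε/2) * r :=
      hanti2 (left_mem_Icc.mpr (by linarith)) (right_mem_Icc.mpr (by linarith)) (by linarith)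
    have hLrδ : L ≤ w (r + δ) := hLle _ (by linarith)
    have hclose := abs_lt.mp (by rw [← Real.dist_eq]; exact hR₁ r hrR₁ :
      |w r - L| < ε * δ / 2)
    nlinarith [hdrop, hLrδ, hclose.2, hδpos, hε]
  -- the limit satisfies L(1-L²)=0
  have hwsqL : Tendsto (fun r => w r * (1 - w r ^ 2)) atTop (𝓝 (L * (1 - L ^ 2))) :=
    hwL.mul (tendsto_const_nhds.sub (hwL.pow 2))
  have hC₀pos : (0:ℝ) < C₀ := by linarith
  have hkey : L * (1 - L ^ 2) = 0 := by
    by_contra hk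
    rcases lt_or_gt_of_ne hk with hneg | hpos
    · -- κ < 0 : w'' ≥ c/r² eventually, so w' ≤ -c/r and w → -∞
      obtain ⟨c, hcdef⟩ : ∃ c : ℝ, c = -(L * (1 - L ^ 2)) / 4 := ⟨_, rfl⟩
      have hcpos : 0 < c := by rw [hcdef]; linarith
      obtain ⟨Ra, hRa⟩ := eventually_atTop.mp
        (hwsqL.eventually (eventually_le_nhds (by linarith : L * (1 - L^2) < L * (1 - L^2) / 2)))
      obtain ⟨Rb, hRb⟩ := Metric.tendsto_atTop.mp hw'0 (c / C₀) (by positivity)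
      obtain ⟨R₃, hR₃def⟩ : ∃ R₃ : ℝ, R₃ = max (max Ra Rb) R₀ := ⟨_, rfl⟩
      have hR₃R₀ : R₀ ≤ R₃ := hR₃def ▸ le_max_right _ _
      have hR₃1 : (1:ℝ) ≤ R₃ := le_trans hR₀1 hR₃R₀
      have hww : ∀ r, R₃ ≤ r → c / r^2 ≤ deriv (deriv w) r := by
        intro r hr
        have hr1 : (1:ℝ) ≤ r := le_trans hR₃1 hr
        have hr0 : (0:ℝ) < r := lt_of_lt_of_le one_pos hr1
        have hApr := hApos r hr0
        have h1 : w r * (1 - w r ^ 2) ≤ L * (1 - L^2) / 2 :=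
          hRa r (le_trans (hR₃def ▸ le_trans (le_max_left _ _) (le_max_left _ _)) hr)
        have h2 : |deriv w r| ≤ c / C₀ := by
          have := hRb r (le_trans (hR₃def ▸ le_trans (le_max_right _ _) (le_max_left _ _)) hr)
          rw [Real.dist_eq, sub_zero] at this
          linarith
        have h3 : |(r * (1 - A r) - (1 - w r ^ 2) ^ 2 / r) * deriv w r| ≤ c := by
          rw [abs_mul]
          calc |r * (1 - A r) - (1 - w r ^ 2) ^ 2 / r| * |deriv w r|
              ≤ C₀ * (c / C₀) := mul_le_mul (hPhiBd r hr1) h2 (abs_nonneg _) (by linarith)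
            _ = c := by field_simp
        have h4 := abs_le.mp h3
        have hnum : c ≤ -((r * (1 - A r) - (1 - w r ^ 2) ^ 2 / r) * deriv w r)
            - w r * (1 - w r ^ 2) := by
          have : L * (1 - L^2) / 2 = -(2*c) := by rw [hcdef]; ring
          linarith [h4.2, h1, this ▸ h1]
        rw [hw''eq r hr0]
        have hd1 : (0:ℝ) < r^2 * A r := by positivity
        calc c / r^2 ≤ c / (r^2 * A r) :=
              div_le_div_of_nonneg_left hcpos.le hd1 (by nlinarith [hAle1 r hr0])
          _ ≤ (-((r * (1 - A r) - (1 - w r ^ 2) ^ 2 / r) * deriv w r) - w r * (1 - w r ^ 2))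
              / (r^2 * A r) := (div_le_div_iff_of_pos_right hd1).mpr hnum
      -- p = w' + c/t is monotone, tends to 0, so w' ≤ -c/t
      have hpmono : MonotoneOn (fun t => deriv w t + c / t) (Ici R₃) := by
        refine monoOn_of_hasDerivAt (convex_Ici R₃)
          (f' := fun t => deriv (deriv w) t + (0 * t - c * 1) / t ^ 2)
          (fun t ht => ?_) ?_
        · have ht0 : (0:ℝ) < t := lt_of_lt_of_le one_pos (le_trans hR₃1 ht)
          exact (hw'D t ht0).add ((hasDerivAt_const t c).div (hasDerivAt_id t) ht0.ne')
        · rw [interior_Ici]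
          intro t ht
          have ht0 : (0:ℝ) < t := lt_of_lt_of_le one_pos (le_trans hR₃1 ht.le)
          have heq : (0 * t - c * 1) / t^2 = -(c / t^2) := by ring
          beta_reduce
          rw [heq]
          linarith [hww t ht.le]
      have hptend : Tendsto (fun t => deriv w t + c / t) atTop (𝓝 0) := by
        have := hw'0.add (Tendsto.const_div_atTop tendsto_id c)
        simpa using this
      have hw'le2 : ∀ r, R₃ ≤ r → deriv w r ≤ -(c/r) := by
        intro r hr
        have h : deriv w r + c / r ≤ 0 := by
          refine ge_of_tendsto hptend ?_
          filter_upwards [eventually_ge_atTop r] with t ht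
          exact hpmono (mem_Ici.mpr hr) (mem_Ici.mpr (le_trans hr ht)) ht
        linarith [h]
      -- w + c log t is antitone, so w → -∞, contradiction
      have hχanti : AntitoneOn (fun t => w t + c * Real.log t) (Ici R₃) := by
        refine antiOn_of_hasDerivAt (convex_Ici R₃)
          (f' := fun t => deriv w t + c * t⁻¹) (fun t ht => ?_) ?_
        · have ht0 : (0:ℝ) < t := lt_of_lt_of_le one_pos (le_trans hR₃1 ht)
          exact (hwD t ht0).add ((Real.hasDerivAt_log ht0.ne').const_mul c)
        · rw [interior_Ici]
          intro t ht
          have ht0 : (0:ℝ) < t := lt_of_lt_of_le one_pos (le_trans hR₃1 ht.le)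
          have h := hw'le2 t ht.le
          have heq : c * t⁻¹ = c / t := by rw [div_eq_mul_inv]
          beta_reduce
          rw [heq]
          linarith
      obtain ⟨T, hTdef⟩ : ∃ T : ℝ,
          T = max R₃ (Real.exp ((w R₃ + c * Real.log R₃ + 2)/c)) := ⟨_, rfl⟩
      have hTR₃ : R₃ ≤ T := hTdef ▸ le_max_left _ _
      have hT0 : (0:ℝ) < T := lt_of_lt_of_le one_pos (le_trans hR₃1 hTR₃)
      have hlogT : (w R₃ + c * Real.log R₃ + 2)/c ≤ Real.log T := by
        rw [Real.le_log_iff_exp_le hT0]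
        exact hTdef ▸ le_max_right _ _
      have hchain : w T + c * Real.log T ≤ w R₃ + c * Real.log R₃ :=
        hχanti self_mem_Ici (mem_Ici.mpr hTR₃) hTR₃
      rw [div_le_iff₀ hcpos] at hlogT
      have hgt := hwgt T hT0
      nlinarith [hlogT, hchain, hgt, hcpos]
    · -- κ > 0 : w'' ≤ -c/r² eventually, so w' ≥ c/r > 0, contradiction
      obtain ⟨c, hcdef⟩ : ∃ c : ℝ, c = (L * (1 - L ^ 2)) / 4 := ⟨_, rfl⟩
      have hcpos : 0 < c := by rw [hcdef]; linarith
      obtain ⟨Ra, hRa⟩ := eventually_atTop.mp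
        (hwsqL.eventually (eventually_ge_nhds (by linarith : L * (1 - L^2) / 2 < L * (1 - L^2))))
      obtain ⟨Rb, hRb⟩ := Metric.tendsto_atTop.mp hw'0 (c / C₀) (by positivity)
      obtain ⟨R₃, hR₃def⟩ : ∃ R₃ : ℝ, R₃ = max (max Ra Rb) R₀ := ⟨_, rfl⟩
      have hR₃R₀ : R₀ ≤ R₃ := hR₃def ▸ le_max_right _ _
      have hR₃1 : (1:ℝ) ≤ R₃ := le_trans hR₀1 hR₃R₀
      have hww : ∀ r, R₃ ≤ r → deriv (deriv w) r ≤ -(c / r^2) := by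
        intro r hr
        have hr1 : (1:ℝ) ≤ r := le_trans hR₃1 hr
        have hr0 : (0:ℝ) < r := lt_of_lt_of_le one_pos hr1
        have hApr := hApos r hr0
        have h1 : L * (1 - L^2) / 2 ≤ w r * (1 - w r ^ 2) :=
          hRa r (le_trans (hR₃def ▸ le_trans (le_max_left _ _) (le_max_left _ _)) hr)
        have h2 : |deriv w r| ≤ c / C₀ := by
          have := hRb r (le_trans (hR₃def ▸ le_trans (le_max_right _ _) (le_max_left _ _)) hr)
          rw [Real.dist_eq, sub_zero] at this
          linarith
        have h3 : |(r * (1 - A r) - (1 - w r ^ 2) ^ 2 / r) * deriv w r| ≤ c := by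
          rw [abs_mul]
          calc |r * (1 - A r) - (1 - w r ^ 2) ^ 2 / r| * |deriv w r|
              ≤ C₀ * (c / C₀) := mul_le_mul (hPhiBd r hr1) h2 (abs_nonneg _) (by linarith)
            _ = c := by field_simp
        have h4 := abs_le.mp h3
        have hnum : -((r * (1 - A r) - (1 - w r ^ 2) ^ 2 / r) * deriv w r)
            - w r * (1 - w r ^ 2) ≤ -c := by
          have h5 : L * (1 - L^2) / 2 = 2*c := by rw [hcdef]; ring
          linarith [h4.1, h5 ▸ h1]
        rw [hw''eq r hr0]
        have hd1 : (0:ℝ) < r^2 * A r := by positivity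
        calc (-((r * (1 - A r) - (1 - w r ^ 2) ^ 2 / r) * deriv w r) - w r * (1 - w r ^ 2))
              / (r^2 * A r)
            ≤ (-c) / (r^2 * A r) := (div_le_div_iff_of_pos_right hd1).mpr hnum
          _ = -(c / (r^2 * A r)) := by rw [neg_div]
          _ ≤ -(c / r^2) := by
              have := div_le_div_of_nonneg_left hcpos.le hd1 (by nlinarith [hAle1 r hr0] :
                r^2 * A r ≤ r^2)
              linarith
      have hqanti : AntitoneOn (fun t => deriv w t - c / t) (Ici R₃) := by
        refine antiOn_of_hasDerivAt (convex_Ici R₃)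
          (f' := fun t => deriv (deriv w) t - (0 * t - c * 1) / t ^ 2)
          (fun t ht => ?_) ?_
        · have ht0 : (0:ℝ) < t := lt_of_lt_of_le one_pos (le_trans hR₃1 ht)
          exact (hw'D t ht0).sub ((hasDerivAt_const t c).div (hasDerivAt_id t) ht0.ne')
        · rw [interior_Ici]
          intro t ht
          have ht0 : (0:ℝ) < t := lt_of_lt_of_le one_pos (le_trans hR₃1 ht.le)
          have heq : (0 * t - c * 1) / t^2 = -(c / t^2) := by ring
          beta_reduce
          rw [heq]
          linarith [hww t ht.le]
      have hqtend : Tendsto (fun t => deriv w t - c / t) atTop (𝓝 0) := by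
        have := hw'0.sub (Tendsto.const_div_atTop tendsto_id c)
        simpa using this
      have h : (0:ℝ) ≤ deriv w R₃ - c / R₃ := by
        refine le_of_tendsto hqtend ?_
        filter_upwards [eventually_ge_atTop R₃] with t ht
        exact hqanti self_mem_Ici (mem_Ici.mpr ht) ht
      have hR₃0 : (0:ℝ) < R₃ := lt_of_lt_of_le one_pos hR₃1
      have h2 : 0 < c / R₃ := by positivity
      have h3 := hw'neg R₃ hR₃0
      linarith [h]
  -- rule out L = 0 via Riccati blow-up
  have hLne0 : L ≠ 0 := by
    intro hL0
    subst hL0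
    have hwpos : ∀ r, 1 ≤ r → 0 < w r := by
      intro r hr
      have h1 : w (r+1) < w r := hwsa (show r ∈ Ioi (0:ℝ) from lt_of_lt_of_le one_pos hr)
        (show r+1 ∈ Ioi (0:ℝ) by simp only [mem_Ioi]; linarith) (by linarith)
      have h2 : (0:ℝ) ≤ w (r+1) := hLle (r+1) (by linarith)
      linarith
    obtain ⟨R₂', hR₂'⟩ := eventually_atTop.mp
      (hwL.eventually (eventually_le_nhds (by norm_num : (0:ℝ) < 1/2)))
    obtain ⟨R₂, hR₂def⟩ : ∃ R₂ : ℝ, R₂ = max (max R₂' R₀) (4 * C₀) := ⟨_, rfl⟩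
    have hR₂R₀ : R₀ ≤ R₂ := hR₂def ▸ le_trans (le_max_right _ _) (le_max_left _ _)
    have hR₂C₀ : 4 * C₀ ≤ R₂ := hR₂def ▸ le_max_right _ _
    have hR₂1 : (1:ℝ) ≤ R₂ := le_trans hR₀1 hR₂R₀
    have hfr : ∀ r, R₂ ≤ r → 1/2 ≤ 1 - w r ^ 2 := by
      intro r hr
      have hr1 : (1:ℝ) ≤ r := le_trans hR₂1 hr
      have h1 : w r ≤ 1/2 :=
        hR₂' r (le_trans (hR₂def ▸ le_trans (le_max_left _ _) (le_max_left _ _)) hr)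
      have h2 : 0 < w r := hwpos r hr1
      nlinarith
    have hgD : ∀ r, 1 ≤ r → HasDerivAt (fun s => -deriv w s / w s)
        ((-deriv (deriv w) r * w r - -deriv w r * deriv w r) / (w r) ^ 2) r := by
      intro r hr
      have hr0 : (0:ℝ) < r := lt_of_lt_of_le one_pos hr
      exact ((hw'D r hr0).neg).div (hwD r hr0) (ne_of_gt (hwpos r hr))
    have hgpos : ∀ r, 1 ≤ r → 0 < -deriv w r / w r := by
      intro r hr
      have hr0 : (0:ℝ) < r := lt_of_lt_of_le one_pos hr
      exact div_pos (by linarith [hw'neg r hr0]) (hwpos r hr)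
    have hkey2 : ∀ r, R₂ ≤ r → (-deriv w r / w r) ^ 2 / 2
        ≤ (-deriv (deriv w) r * w r - -deriv w r * deriv w r) / (w r) ^ 2 := by
      intro r hr
      have hr1 : (1:ℝ) ≤ r := le_trans hR₂1 hr
      have hr0 : (0:ℝ) < r := lt_of_lt_of_le one_pos hr1
      have hw1 : 0 < w r := hwpos r hr1
      have hA2 := hAhalf r (le_trans hR₂R₀ hr)
      have hA3 := hAle1 r hr0
      have hApr := hApos r hr0
      have hΦ2 := abs_le.mp (hPhiBd r hr1)
      have h12 := hfr r hr
      have hv : 0 < -deriv w r := by linarith [hw'neg r hr0]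
      have hmain : deriv (deriv w) r * w r ≤ (deriv w r)^2 / 2 := by
        rw [hw''eq r hr0, div_mul_eq_mul_div, div_le_iff₀ (by positivity)]
        have t1 : (r * (1 - A r) - (1 - w r ^ 2) ^ 2 / r) * ((-deriv w r) * w r)
            ≤ C₀ * ((-deriv w r) * w r) :=
          mul_le_mul_of_nonneg_right hΦ2.2 (mul_nonneg hv.le hw1.le)
        have t2 : (-deriv w r) * r * w r ≤ (deriv w r)^2 * r^2/4 + (w r)^2 := by
          nlinarith [sq_nonneg ((-deriv w r) * r - 2 * w r)]
        have t3 : C₀ * ((-deriv w r) * w r) ≤ ((-deriv w r) * r * w r) / 4 := by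
          nlinarith [mul_nonneg (by linarith : (0:ℝ) ≤ r/4 - C₀)
            (mul_nonneg hv.le hw1.le)]
        have t4 : (w r)^2 / 2 ≤ (w r)^2 * (1 - w r ^ 2) := by
          nlinarith [mul_nonneg (by linarith : (0:ℝ) ≤ 1 - w r^2 - 1/2) (sq_nonneg (w r))]
        have t5 : (deriv w r)^2 * r^2 / 4 ≤ (deriv w r)^2/2 * (r^2 * A r) := by
          nlinarith [mul_nonneg (by linarith : (0:ℝ) ≤ A r - 1/2)
            (mul_nonneg (sq_nonneg (deriv w r)) (sq_nonneg r))]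
        nlinarith [t1, t2, t3, t4, t5]
      have hgsq : (-deriv w r / w r)^2/2 = ((deriv w r)^2/2) / (w r)^2 := by
        rw [div_pow]; ring
      rw [hgsq]
      refine (div_le_div_iff_of_pos_right (by positivity)).mpr ?_
      nlinarith [hmain]
    have hψanti : AntitoneOn (fun s => (-deriv w s / w s)⁻¹ + s/2) (Ici R₂) := by
      refine antiOn_of_hasDerivAt (convex_Ici R₂)
        (f' := fun s => -((-deriv (deriv w) s * w s - -deriv w s * deriv w s) / (w s) ^ 2)
          / (-deriv w s / w s) ^ 2 + 1 / 2) (fun s hs => ?_) ?_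
      · exact ((hgD s (le_trans hR₂1 hs)).inv
          (ne_of_gt (hgpos s (le_trans hR₂1 hs)))).add ((hasDerivAt_id s).div_const 2)
      · rw [interior_Ici]
        intro s hs
        have hs' : R₂ ≤ s := hs.le
        have hs1 : (1:ℝ) ≤ s := le_trans hR₂1 hs'
        have h1 := hkey2 s hs'
        have hg := hgpos s hs1
        have hg2 : (0:ℝ) < (-deriv w s / w s)^2 := by positivity
        have h3 : (-deriv w s / w s)^2/2 / (-deriv w s / w s)^2 = 1/2 := by
          rw [div_right_comm, div_self (ne_of_gt hg2)]
        have h4 := (div_le_div_iff_of_pos_right hg2).mpr h1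
        rw [h3] at h4
        beta_reduce
        rw [neg_div]
        linarith [h4]
    obtain ⟨T, hTdef⟩ : ∃ T : ℝ, T = R₂ + 2*(-deriv w R₂ / w R₂)⁻¹ + 2 := ⟨_, rfl⟩
    have hginvpos : 0 < (-deriv w R₂ / w R₂)⁻¹ := inv_pos.mpr (hgpos R₂ hR₂1)
    have hTR₂ : R₂ ≤ T := by rw [hTdef]; linarith
    have h := hψanti self_mem_Ici (mem_Ici.mpr hTR₂) hTR₂
    have hgTpos : 0 < (-deriv w T / w T)⁻¹ := inv_pos.mpr (hgpos T (le_trans hR₂1 hTR₂))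
    simp only at h
    linarith [h, hgTpos, hginvpos, hTdef.ge, hTdef.le]
  -- conclude
  have hL0or : L = 0 ∨ L = 1 ∨ L = -1 := by
    rcases mul_eq_zero.mp hkey with h | h
    · exact Or.inl h
    · right
      have h2 : (1 - L) * (1 + L) = 0 := by nlinarith [h]
      rcases mul_eq_zero.mp h2 with h1 | h1
      · exact Or.inl (by linarith)
      · exact Or.inr (by linarith)
  have hLlt1 : L < 1 := by
    have h21 : w 2 < w 1 := hwsa (mem_Ioi.mpr one_pos) (mem_Ioi.mpr two_pos) one_lt_two
    have h2 := hLle 2 (by norm_num)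
    have h3 := hwle1 1 one_pos
    linarith
  have hLval : L = -1 := by
    rcases hL0or with h | h | h
    · exact absurd h hLne0
    · linarith
    · exact h
  exact ⟨hLval ▸ hwL, hw'0, hAtop⟩
end

section
/- Let (w, A) be a solution of the Bartnik–McKinnon ODE system (2a)–(2b) on (0, ∞) with regularity conditions w(0⁺) = 1, w'(0⁺) = 0, A(0⁺) = 1, such that for all r > 0 one has −1 < w(r) < 1, w'(r) < 0, A(r) > 0, and such that w(r) → −1, w'(r) → 0 as r → ∞. Then the total mass of the associated spacetime is finite: the limit lim_{r→∞} r(1 − A(r)) exists and is a finite real number. -/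
open Set Filter Topology

/-- **Finite total mass.** If `(w, A)` solves (2a)–(2b) on `(0, ∞)` with the
regularity conditions, stays in `-1 < w < 1`, `w' < 0`, `A > 0`, and
`w → -1`, `w' → 0` as `r → ∞`, then `lim_{r→∞} r(1 - A(r))` exists and is
finite. -/
theorem stmt9 (w A : ℝ → ℝ)
    (hsol : IsBMSolutionOn w A (Ioi 0))
    (hreg : RegularAtOrigin w A)
    (horbit : ∀ r : ℝ, 0 < r → -1 < w r ∧ w r < 1 ∧ deriv w r < 0 ∧ 0 < A r)
    (hw : Tendsto w atTop (𝓝 (-1)))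
    (hw' : Tendsto (deriv w) atTop (𝓝 0)) :
    ∃ m : ℝ, Tendsto (fun r : ℝ => r * (1 - A r)) atTop (𝓝 m) := by
  obtain ⟨hwC, hAC, _heq1, heq2⟩ := hsol
  set f : ℝ → ℝ := fun r => r * (1 - A r) with hf_def
  -- derivative facts
  have hAdA : ∀ r ∈ Ioi (0:ℝ), HasDerivAt A (deriv A r) r := by
    intro r hr
    exact ((hAC.differentiableOn one_ne_zero).differentiableAt
      (isOpen_Ioi.mem_nhds hr)).hasDerivAt
  have hwdw : ∀ r ∈ Ioi (0:ℝ), HasDerivAt w (deriv w r) r := by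
    intro r hr
    exact ((hwC.differentiableOn (by norm_num)).differentiableAt
      (isOpen_Ioi.mem_nhds hr)).hasDerivAt
  have hfD : ∀ r ∈ Ioi (0:ℝ),
      HasDerivAt f (2 * (deriv w r) ^ 2 * A r + (1 - (w r) ^ 2) ^ 2 / r ^ 2) r := by
    intro r hr
    have hr0 : (0:ℝ) < r := hr
    have h1 : HasDerivAt f (1 * (1 - A r) + r * (0 - deriv A r)) r :=
      (hasDerivAt_id r).mul ((hasDerivAt_const r (1:ℝ)).sub (hAdA r hr))
    convert h1 using 1
    have h2 := heq2 r hr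
    linear_combination h2
  have hfcont : ContinuousOn f (Ioi 0) :=
    continuousOn_id.mul (continuousOn_const.sub hAC.continuousOn)
  have hfderiv_nonneg : ∀ r ∈ Ioi (0:ℝ), 0 ≤ deriv f r := by
    intro r hr
    rw [(hfD r hr).deriv]
    have hA := (horbit r hr).2.2.2
    have : (0:ℝ) ≤ 2 * (deriv w r) ^ 2 * A r :=
      mul_nonneg (by positivity) hA.le
    have : (0:ℝ) ≤ (1 - (w r) ^ 2) ^ 2 / r ^ 2 :=
      div_nonneg (sq_nonneg _) (sq_nonneg _)
    linarith
  have hfmono : MonotoneOn f (Ioi 0) := by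
    apply monotoneOn_of_deriv_nonneg (convex_Ioi 0) hfcont
    · rw [interior_Ioi]
      exact fun x hx => ((hfD x hx).differentiableAt).differentiableWithinAt
    · rw [interior_Ioi]; exact hfderiv_nonneg
  -- f → 0 at 0⁺, hence f ≥ 0 on (0,∞), hence A ≤ 1
  have hf0 : Tendsto f (𝓝[>] (0:ℝ)) (𝓝 0) := by
    have h1 : Tendsto (fun r : ℝ => r) (𝓝[>] (0:ℝ)) (𝓝 0) :=
      tendsto_id.mono_left nhdsWithin_le_nhds
    have h2 : Tendsto (fun r : ℝ => 1 - A r) (𝓝[>] (0:ℝ)) (𝓝 0) := by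
      have := (tendsto_const_nhds (x := (1:ℝ))).sub hreg.2.2
      simpa using this
    simpa using h1.mul h2
  have hfnn : ∀ r ∈ Ioi (0:ℝ), 0 ≤ f r := by
    intro r hr
    refine le_of_tendsto hf0 ?_
    filter_upwards [Ioo_mem_nhdsGT (show (0:ℝ) < r from hr)] with s hs
    exact hfmono hs.1 hr hs.2.le
  have hA1 : ∀ r ∈ Ioi (0:ℝ), A r ≤ 1 := by
    intro r hr
    have h0 := hfnn r hr
    simp only [hf_def] at h0
    have hr0 : (0:ℝ) < r := hr
    nlinarith
  -- choose R with |w'| ≤ 1 beyond R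
  have hev : ∀ᶠ r in atTop, deriv w r ∈ Icc (-1:ℝ) 1 :=
    hw'.eventually (Icc_mem_nhds (by norm_num) (by norm_num))
  obtain ⟨R₀, hR₀⟩ := hev.exists_forall_of_atTop
  set R : ℝ := max R₀ 1 with hR_def
  have hR1 : (1:ℝ) ≤ R := le_max_right _ _
  have hRpos : (0:ℝ) < R := lt_of_lt_of_le one_pos hR1
  have hsub : Ici R ⊆ Ioi (0:ℝ) := fun x hx => lt_of_lt_of_le hRpos hx
  -- auxiliary function h = f + 2w + x⁻¹, antitone on [R,∞)
  set g : ℝ → ℝ := fun x => f x + 2 * w x + x⁻¹ with hg_def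
  have hgD : ∀ r ∈ Ioi (0:ℝ),
      HasDerivAt g (2 * (deriv w r) ^ 2 * A r + (1 - (w r) ^ 2) ^ 2 / r ^ 2
        + 2 * deriv w r + -(r ^ 2)⁻¹) r := by
    intro r hr
    have hr0 : (0:ℝ) < r := hr
    exact ((hfD r hr).add ((hwdw r hr).const_mul 2)).add (hasDerivAt_inv hr0.ne')
  have hganti : AntitoneOn g (Ici R) := by
    apply antitoneOn_of_deriv_nonpos (convex_Ici R)
    · apply ContinuousOn.add
      · exact (hfcont.mono hsub).add
          ((hwC.continuousOn.mono hsub).const_smul (2:ℝ))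
      · exact continuousOn_inv₀.mono (fun x hx => (lt_of_lt_of_le hRpos hx).ne')
    · rw [interior_Ici]
      intro x hx
      exact ((hgD x (hsub (mem_Ici.mpr (le_of_lt hx)))).differentiableAt).differentiableWithinAt
    · rw [interior_Ici]
      intro x hx
      have hx0 : (0:ℝ) < x := lt_of_le_of_lt hRpos.le (lt_of_le_of_lt le_rfl hx)
      rw [(hgD x hx0).deriv]
      have hxR0 : R₀ ≤ x := le_trans (le_max_left _ _) hx.le
      have hdw := hR₀ x hxR0
      have hdwneg : deriv w x < 0 := (horbit x hx0).2.2.1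
      have hA := (horbit x hx0).2.2.2
      have hA1' := hA1 x hx0
      have hw1 : (w x) ^ 2 < 1 := by
        have h1 := (horbit x hx0).1; have h2 := (horbit x hx0).2.1
        nlinarith
      -- 2 w'² A ≤ -2 w'
      have e1 : 2 * (deriv w x) ^ 2 * A x ≤ -(2 * deriv w x) := by
        nlinarith [hdw.1, sq_nonneg (deriv w x)]
      -- (1-w²)²/x² ≤ x⁻²
      have e2 : (1 - (w x) ^ 2) ^ 2 / x ^ 2 ≤ (x ^ 2)⁻¹ := by
        rw [inv_eq_one_div]
        apply div_le_div_of_nonneg_right ?_ (by positivity) |>.trans_eq rfl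
        nlinarith [sq_nonneg (w x)]
      linarith
  -- bound f on [R,∞)
  have hbound : ∀ r ∈ Ici R, f r ≤ g R + 2 := by
    intro r hr
    have hr0 : (0:ℝ) < r := hsub hr
    have := hganti (le_refl R : R ∈ Ici R) hr hr
    have hwr : -1 < w r := (horbit r hr0).1
    have hinv : (0:ℝ) < r⁻¹ := by positivity
    have h2 : f r + 2 * w r + r⁻¹ ≤ g R := this
    have h3 : -2 * w r < 2 := by linarith
    calc f r = (f r + 2 * w r + r⁻¹) + (-2 * w r) + (-r⁻¹) := by ring
      _ ≤ g R + 2 + 0 := by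
          apply add_le_add (add_le_add h2 h3.le) (by linarith)
      _ = g R + 2 := by ring
  -- monotone bounded ⇒ converges
  have hfmonoR : MonotoneOn f (Ici R) := hfmono.mono hsub
  set F : ℝ → ℝ := fun x => f (max x R) with hF_def
  have hFmono : Monotone F := by
    intro a b hab
    exact hfmonoR (le_max_right a R) (le_max_right b R) (max_le_max hab le_rfl)
  have hFbdd : BddAbove (range F) := by
    refine ⟨g R + 2, ?_⟩
    rintro _ ⟨x, rfl⟩
    exact hbound _ (le_max_right x R)
  have hFlim : Tendsto F atTop (𝓝 (⨆ x, F x)) := tendsto_atTop_ciSup hFmono hFbdd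
  refine ⟨⨆ x, F x, ?_⟩
  have heq : ∀ᶠ x in atTop, F x = f x := by
    filter_upwards [eventually_ge_atTop R] with x hx
    simp [hF_def, max_eq_left hx]
  exact (hFlim.congr' heq)
end

section
/- Let (w, A) be a solution of the Bartnik–McKinnon ODE system (2a)–(2b) on (0, ∞) with regularity conditions w(0⁺) = 1, w'(0⁺) = 0, A(0⁺) = 1, such that A(r) > 0, −1 < w(r) < 1 and w'(r) < 0 for all r > 0, and w(r) → −1, w'(r) → 0, A(r) → 1 as r → ∞. Then there exists a positive, continuously differentiable function T : (0, ∞) → ℝ solving equation (2c): 2rA(r)T'(r) + (2w'(r)²A(r) + Φ(r)/r)T(r) = 0, and satisfying T(r) → 1 as r → ∞ and T'(r) → 0 as r → 0⁺. In particular the full metric ds² = −T⁻²dt² + A⁻¹dr² + r²(dθ² + sin²θ dφ²) is asymptotically flat: (A(r), T(r)) → (1, 1) as r → ∞. -/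
open Set Filter Topology MeasureTheory intervalIntegral

lemma nonneg_of_hasDerivAt_nonneg {f f' : ℝ → ℝ} {b : ℝ}
    (hd : ∀ r ∈ Set.Ioc (0:ℝ) b, HasDerivAt f (f' r) r)
    (h' : ∀ r ∈ Set.Ioc (0:ℝ) b, 0 ≤ f' r)
    (h0 : Tendsto f (𝓝[>] (0:ℝ)) (𝓝 0)) :
    ∀ r ∈ Set.Ioc (0:ℝ) b, 0 ≤ f r := by
  have hmono : MonotoneOn f (Ioc 0 b) := by
    apply monotoneOn_of_deriv_nonneg (convex_Ioc 0 b)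
    · exact fun x hx => (hd x hx).continuousAt.continuousWithinAt
    · intro x hx
      rw [interior_Ioc] at hx
      exact ((hd x (Ioo_subset_Ioc_self hx)).differentiableAt).differentiableWithinAt
    · intro x hx
      rw [interior_Ioc] at hx
      rw [(hd x (Ioo_subset_Ioc_self hx)).deriv]
      exact h' x (Ioo_subset_Ioc_self hx)
  intro r hr
  refine le_of_tendsto h0 ?_
  filter_upwards [Ioo_mem_nhdsGT_of_mem (⟨le_refl 0, hr.1⟩ : (0:ℝ) ∈ Ico 0 r)] with s hs
  exact hmono ⟨hs.1, hs.2.le.trans hr.2⟩ hr hs.2.le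

noncomputable def Ffun (w : ℝ → ℝ) (r : ℝ) : ℝ :=
  ∫ s in (0:ℝ)..r, 2*(deriv w s)^2/s

noncomputable def Tfun (w A : ℝ → ℝ) (r : ℝ) : ℝ :=
  Real.exp ((∫ s in Set.Ioi (0:ℝ), 2*(deriv w s)^2/s) - Ffun w r) / Real.sqrt (A r)

lemma Talg (E s Ad g : ℝ) (hs : 0 < s) :
    (E / s) * (-g - Ad/(2*s^2)) = (E * -g * s - E * (1/(2*s) * Ad)) / s^2 := by
  have hs0 : s ≠ 0 := ne_of_gt hs
  field_simp

set_option maxHeartbeats 4000000 in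
/-- **Solving (2c) for `T` and asymptotic flatness.** If `(w, A)` solves
(2a)–(2b) on `(0, ∞)` with the regularity conditions, `A > 0`, `-1 < w < 1`,
`w' < 0` on `(0, ∞)`, and `w → -1`, `w' → 0`, `A → 1` as `r → ∞`, then there
is a positive C¹ function `T` on `(0, ∞)` solving
(2c) `2rAT' + (2w'²A + Φ/r)T = 0`, with `T → 1` as `r → ∞` and `T' → 0` as
`r → 0⁺`; in particular `(A, T) → (1, 1)` as `r → ∞`. -/
theorem stmt10 (w A : ℝ → ℝ)
    (hsol : IsBMSolutionOn w A (Ioi 0))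
    (hreg : RegularAtOrigin w A)
    (horbit : ∀ r : ℝ, 0 < r → 0 < A r ∧ -1 < w r ∧ w r < 1 ∧ deriv w r < 0)
    (hw : Tendsto w atTop (𝓝 (-1)))
    (hw' : Tendsto (deriv w) atTop (𝓝 0))
    (hA : Tendsto A atTop (𝓝 1)) :
    ∃ T : ℝ → ℝ,
      (∀ r : ℝ, 0 < r → 0 < T r) ∧
      ContDiffOn ℝ 1 T (Ioi 0) ∧
      (∀ r ∈ Ioi (0 : ℝ),
        2 * r * A r * deriv T r
          + (2 * (deriv w r) ^ 2 * A r + Phi w A r / r) * T r = 0) ∧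
      Tendsto T atTop (𝓝 1) ∧
      Tendsto (deriv T) (𝓝[>] (0 : ℝ)) (𝓝 0) ∧
      Tendsto A atTop (𝓝 1) := by
  obtain ⟨hw2, hA1, heq1, heq2⟩ := hsol
  obtain ⟨hreg1, hreg2, hreg3⟩ := hreg
  have hopen : IsOpen (Ioi (0:ℝ)) := isOpen_Ioi
  -- basic differentiability facts
  have hwdiff : ∀ r ∈ Ioi (0:ℝ), HasDerivAt w (deriv w r) r := fun r hr =>
    ((hw2.differentiableOn (by simp)).differentiableAt (hopen.mem_nhds hr)).hasDerivAt
  have hw1 : ContDiffOn ℝ 1 (deriv w) (Ioi 0) := hw2.deriv_of_isOpen hopen (by norm_num)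
  have hw'diff : ∀ r ∈ Ioi (0:ℝ), HasDerivAt (deriv w) (deriv (deriv w) r) r := fun r hr =>
    ((hw1.differentiableOn (by simp)).differentiableAt (hopen.mem_nhds hr)).hasDerivAt
  have hAdiff : ∀ r ∈ Ioi (0:ℝ), HasDerivAt A (deriv A r) r := fun r hr =>
    ((hA1.differentiableOn (by simp)).differentiableAt (hopen.mem_nhds hr)).hasDerivAt
  have hwcont : ContinuousOn w (Ioi 0) := hw2.continuousOn
  have hw'cont : ContinuousOn (deriv w) (Ioi 0) := hw1.continuousOn
  have hAcont : ContinuousOn A (Ioi 0) := hA1.continuousOn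
  have hA'cont : ContinuousOn (deriv A) (Ioi 0) :=
    hA1.continuousOn_deriv_of_isOpen hopen le_rfl
  -- identity (from 2b): r * A' = Phi/r - 2 w'^2 A
  have idB : ∀ r ∈ Ioi (0:ℝ), r * deriv A r = Phi w A r / r - 2 * (deriv w r)^2 * A r := by
    intro r hr
    have hr0 : (r:ℝ) ≠ 0 := ne_of_gt hr
    have h2 := heq2 r hr
    simp only [Phi]
    field_simp
    field_simp at h2
    linarith
  -- mass function
  have hmderiv : ∀ r ∈ Ioi (0:ℝ), HasDerivAt (fun s => s * (1 - A s))
      ((1 - (w r)^2)^2 / r^2 + 2 * (deriv w r)^2 * A r) r := by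
    intro r hr
    have hr0 : (r:ℝ) ≠ 0 := ne_of_gt hr
    have h := (hasDerivAt_id r).mul ((hasDerivAt_const r (1:ℝ)).sub (hAdiff r hr))
    refine h.congr_deriv ?_
    have h2 := heq2 r hr
    simp only [Pi.sub_apply, id_eq] at ⊢
    field_simp at h2 ⊢
    ring_nf
    ring_nf at h2
    linarith
  have hm0 : Tendsto (fun s => s * (1 - A s)) (𝓝[>] (0:ℝ)) (𝓝 0) := by
    have h1 : Tendsto (fun s : ℝ => s) (𝓝[>] (0:ℝ)) (𝓝 0) :=
      tendsto_id.mono_left nhdsWithin_le_nhds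
    have h2 : Tendsto (fun s => 1 - A s) (𝓝[>] (0:ℝ)) (𝓝 0) := by
      simpa using (tendsto_const_nhds (x := (1:ℝ))).sub hreg3
    simpa using h1.mul h2
  have hAle1 : ∀ r ∈ Ioi (0:ℝ), A r ≤ 1 := by
    intro r hr
    have key := nonneg_of_hasDerivAt_nonneg
      (f := fun s => s * (1 - A s))
      (f' := fun s => (1 - (w s)^2)^2 / s^2 + 2 * (deriv w s)^2 * A s)
      (b := r)
      (fun s hs => hmderiv s hs.1) (fun s hs => by
        have hA0 := (horbit s hs.1).1
        positivity) hm0 r ⟨hr, le_rfl⟩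
    have key' : 0 ≤ r * (1 - A r) := key
    have hrpos : (0:ℝ) < r := hr
    nlinarith [key', hrpos]
  -- polynomial forms of the equations
  have heq1' : ∀ r ∈ Ioi (0:ℝ), r^3 * A r * deriv (deriv w) r
      + (r^2*(1 - A r) - (1 - (w r)^2)^2) * deriv w r + r * w r * (1 - (w r)^2) = 0 := by
    intro r hr
    have hr0 : (r:ℝ) ≠ 0 := ne_of_gt hr
    have e1 := heq1 r hr
    simp only [Phi] at e1
    field_simp at e1
    linear_combination e1
  have heq2' : ∀ r ∈ Ioi (0:ℝ), r^3 * deriv A r + r^2 * (1 + 2 * (deriv w r)^2) * A r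
      = r^2 - (1 - (w r)^2)^2 := by
    intro r hr
    have hr0 : (r:ℝ) ≠ 0 := ne_of_gt hr
    have e2 := heq2 r hr
    field_simp at e2
    linear_combination e2
  have hid0 : Tendsto (fun s : ℝ => s) (𝓝[>] (0:ℝ)) (𝓝 (0:ℝ)) :=
    tendsto_id.mono_right (by simpa using nhdsWithin_le_nhds (a := (0:ℝ)) (s := Ioi 0))
  -- choose δ with quantitative bounds near the origin
  have hev : ∀ᶠ r in 𝓝[>] (0:ℝ),
      (99/100:ℝ) ≤ A r ∧ (99/100:ℝ) ≤ w r ∧ -(1/100:ℝ) ≤ deriv w r := by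
    have h1 := hreg3 (Ici_mem_nhds (show (99/100:ℝ) < 1 by norm_num))
    have h2 := hreg1 (Ici_mem_nhds (show (99/100:ℝ) < 1 by norm_num))
    have h3 := hreg2 (Ici_mem_nhds (show -(1/100:ℝ) < 0 by norm_num))
    filter_upwards [h1, h2, h3] with r ha hb hc
    exact ⟨ha, hb, hc⟩
  obtain ⟨δ, hδpos', hδ⟩ := mem_nhdsGT_iff_exists_Ioc_subset.mp hev
  have hδpos : (0:ℝ) < δ := hδpos'
  have hA99 : ∀ r ∈ Ioc (0:ℝ) δ, (99/100:ℝ) ≤ A r := fun r hr => (hδ hr).1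
  have hw99 : ∀ r ∈ Ioc (0:ℝ) δ, (99/100:ℝ) ≤ w r := fun r hr => (hδ hr).2.1
  have hq01 : ∀ r ∈ Ioc (0:ℝ) δ, -(1/100:ℝ) ≤ deriv w r := fun r hr => (hδ hr).2.2
  -- (c1) : 1 - w r ≤ r/100 on Ioc 0 δ
  have hu01 : ∀ r ∈ Ioc (0:ℝ) δ, 1 - w r ≤ (1/100) * r := by
    have key := nonneg_of_hasDerivAt_nonneg
      (f := fun s => (1/100:ℝ) * s - (1 - w s))
      (f' := fun s => (1/100:ℝ) + deriv w s) (b := δ)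
      (fun s hs => by
        have h := ((hasDerivAt_id s).const_mul (1/100:ℝ)).sub
          ((hasDerivAt_const s (1:ℝ)).sub (hwdiff s hs.1))
        refine h.congr_deriv ?_
        ring)
      (fun s hs => by linarith [hq01 s hs])
      (by
        have h1 : Tendsto (fun s : ℝ => (1/100:ℝ)*s) (𝓝[>] (0:ℝ)) (𝓝 0) := by
          simpa using hid0.const_mul (1/100:ℝ)
        have h2 : Tendsto (fun s => 1 - w s) (𝓝[>] (0:ℝ)) (𝓝 0) := by
          simpa using (tendsto_const_nhds (x := (1:ℝ))).sub hreg1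
        simpa using h1.sub h2)
    intro r hr
    have h : 0 ≤ (1/100:ℝ) * r - (1 - w r) := key r hr
    linarith
  -- (c2) : 0 ≤ 2 r (1-w) + r² A w'
  have hc2 : ∀ r ∈ Ioc (0:ℝ) δ, 0 ≤ 2*r*(1 - w r) + r^2 * A r * deriv w r := by
    apply nonneg_of_hasDerivAt_nonneg
      (f' := fun s => (2*(1 - w s) + 2*s*(0 - deriv w s))
        + ((2*s^1*A s + s^2*deriv A s)*deriv w s + s^2*A s*deriv (deriv w) s))
    · intro s hs
      have h1 : HasDerivAt (fun t => 2*t*(1 - w t)) (2*(1 - w s) + 2*s*(0 - deriv w s)) s := by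
        have h := ((hasDerivAt_id s).mul
          ((hasDerivAt_const s (1:ℝ)).sub (hwdiff s hs.1))).const_mul (2:ℝ)
        simp only [Pi.mul_apply, Pi.sub_apply, id_eq, ← mul_assoc] at h
        refine h.congr_deriv ?_
        ring
      have h2 : HasDerivAt (fun t => t^2 * A t * deriv w t)
          ((2*s^1*A s + s^2*deriv A s)*deriv w s + s^2*A s*deriv (deriv w) s) s := by
        have h := ((hasDerivAt_pow 2 s).mul (hAdiff s hs.1)).mul (hw'diff s hs.1)
        refine h.congr_deriv ?_
        simp only [Pi.mul_apply]
        ring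
      exact h1.add h2
    · intro s hs
      have hs0 : (0:ℝ) < s := hs.1
      have hA0 := (horbit s hs.1).1
      have hwlt1 := (horbit s hs.1).2.2.1
      have hwneg := (horbit s hs.1).2.2.2
      have e1 := heq1' s hs.1
      have e2 := heq2' s hs.1
      have hAle := hAle1 s hs.1
      have hw9 := hw99 s hs
      have hVeq' : s * ((2*(1 - w s) + 2*s*(0 - deriv w s))
          + ((2*s^1*A s + s^2*deriv A s)*deriv w s + s^2*A s*deriv (deriv w) s))
          = s * ((1 - w s)^2*(2 + w s)
            + 2*s*(-(deriv w s))*(1 - A s + A s*(deriv w s)^2)) := by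
        linear_combination e1 + (deriv w s) * e2
      have hVeq := mul_left_cancel₀ (ne_of_gt hs0) hVeq'
      rw [hVeq]
      have t1 : 0 ≤ (1 - w s)^2*(2 + w s) := by nlinarith
      have t2 : 0 ≤ 2*s*(-(deriv w s))*(1 - A s + A s*(deriv w s)^2) := by
        have h3 : 0 ≤ A s * (deriv w s)^2 := by positivity
        apply mul_nonneg (mul_nonneg (by linarith) (by linarith)) (by linarith)
      linarith
    · have h1 : Tendsto (fun s : ℝ => 2*s*(1 - w s)) (𝓝[>] (0:ℝ)) (𝓝 0) := by
        have := (hid0.const_mul (2:ℝ)).mul ((tendsto_const_nhds (x := (1:ℝ))).sub hreg1)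
        simpa [mul_assoc] using this
      have h2 : Tendsto (fun s : ℝ => s^2 * A s * deriv w s) (𝓝[>] (0:ℝ)) (𝓝 0) := by
        have := ((hid0.pow 2).mul hreg3).mul hreg2
        simpa using this
      simpa using h1.add h2
  -- q·s·A ≤ 2(1-w) and s·q ≤ (200/99)(1-w)
  have hsAq : ∀ r ∈ Ioc (0:ℝ) δ, r * A r * (-(deriv w r)) ≤ 2*(1 - w r) := by
    intro r hr
    have hr0 : (0:ℝ) < r := hr.1
    have h := hc2 r hr
    have h2 : r * (r * A r * (-(deriv w r))) ≤ r * (2*(1 - w r)) := by nlinarith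
    exact le_of_mul_le_mul_left h2 hr0
  have hsq : ∀ r ∈ Ioc (0:ℝ) δ, r * (-(deriv w r)) ≤ (200/99)*(1 - w r) := by
    intro r hr
    have hr0 : (0:ℝ) < r := hr.1
    have hA9 := hA99 r hr
    have hq := hsAq r hr
    have hqpos : 0 ≤ -(deriv w r) := by linarith [(horbit r hr.1).2.2.2]
    nlinarith [mul_le_mul_of_nonneg_left hq (by norm_num : (0:ℝ) ≤ 100/99),
      mul_nonneg (mul_nonneg hr0.le hqpos) (by linarith : (0:ℝ) ≤ A r - 99/100)]
  -- (c3) : (8/5)(1-w) ≤ r·(-w')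
  have hZ : ∀ r ∈ Ioc (0:ℝ) δ, 0 ≤ -(r * deriv w r) - (8/5)*(1 - w r) := by
    apply nonneg_of_hasDerivAt_nonneg
      (f' := fun s => -((1:ℝ) * deriv w s + s * deriv (deriv w) s) + (8/5)*deriv w s)
    · intro s hs
      have h1 := ((hasDerivAt_id s).mul (hw'diff s hs.1)).neg
      have h2 := ((hasDerivAt_const s (1:ℝ)).sub (hwdiff s hs.1)).const_mul (8/5:ℝ)
      have h := h1.sub h2
      refine h.congr_deriv ?_
      simp only [Pi.mul_apply, id_eq]
      ring
    · intro s hs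
      have hs0 : (0:ℝ) < s := hs.1
      have hA0 := (horbit s hs.1).1
      have hwlt1 := (horbit s hs.1).2.2.1
      have hwneg := (horbit s hs.1).2.2.2
      have e1 := heq1' s hs.1
      have hAle := hAle1 s hs.1
      have hA9 := hA99 s hs
      have hw9 := hw99 s hs
      have hu := hu01 s hs
      have hq2 := hsAq s hs
      have hq3 := hsq s hs
      -- multiply the goal by s^2 * A s > 0
      have hpos : (0:ℝ) < s^2 * A s := by positivity
      have key : 0 ≤ s^2 * A s * (-((1:ℝ) * deriv w s + s * deriv (deriv w) s)
          + (8/5)*deriv w s) := by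
        have hkey_eq : s^2 * A s * (-((1:ℝ) * deriv w s + s * deriv (deriv w) s)
            + (8/5)*deriv w s)
            = (3/5)*s^2*A s*deriv w s + (s^2*(1 - A s) - (1 - (w s)^2)^2) * deriv w s
              + s * w s * (1 - (w s)^2) := by
          linear_combination -e1
        rw [hkey_eq]
        -- bounds
        have hqpos : 0 ≤ -(deriv w s) := by linarith
        have g0 : 0 ≤ (1 - (w s)^2)^2 * (-(deriv w s)) := by positivity
        have g1 : (3/5)*s^2*A s*(-(deriv w s)) ≤ (6/5)*s*(1 - w s) := by
          nlinarith [mul_le_mul_of_nonneg_left hq2 (by linarith : (0:ℝ) ≤ (3/5)*s)]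
        have g2 : s^2*(1 - A s)*(-(deriv w s)) ≤ (2/99)*s*(1 - w s) := by
          have b1 : s*(1 - A s) ≤ s*(1/100) := by nlinarith
          have b2 : 0 ≤ s*(1 - A s) := by nlinarith
          have b3 : 0 ≤ s*(-(deriv w s)) := by nlinarith
          nlinarith [mul_le_mul hq3 b1 b2 (by nlinarith : (0:ℝ) ≤ (200/99)*(1 - w s))]
        have g3 : (19701/10000)*s*(1 - w s) ≤ s * w s * (1 - (w s)^2) := by
          nlinarith [mul_nonneg (mul_nonneg hs0.le (by linarith : (0:ℝ) ≤ 1 - w s))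
            (by nlinarith : (0:ℝ) ≤ w s*(1 + w s) - 19701/10000)]
        nlinarith [g0, g1, g2, g3]
      have key2 : s^2*A s*0 ≤ s^2*A s*(-((1:ℝ) * deriv w s + s * deriv (deriv w) s)
          + (8/5)*deriv w s) := by linarith [key]
      simpa using le_of_mul_le_mul_left key2 hpos
    · have h1 : Tendsto (fun s : ℝ => -(s * deriv w s)) (𝓝[>] (0:ℝ)) (𝓝 0) := by
        have := (hid0.mul hreg2).neg
        simpa using this
      have h2 : Tendsto (fun s : ℝ => (8/5)*(1 - w s)) (𝓝[>] (0:ℝ)) (𝓝 0) := by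
        have := ((tendsto_const_nhds (x := (1:ℝ))).sub hreg1).const_mul (8/5:ℝ)
        simpa using this
      simpa using h1.sub h2
  -- tendsto of rpow at 0+
  have hrpow0 : ∀ p : ℝ, 0 < p → Tendsto (fun s : ℝ => s ^ (p:ℝ)) (𝓝[>] (0:ℝ)) (𝓝 0) := by
    intro p hp
    have hc : ContinuousAt (fun x : ℝ => x ^ (p:ℝ)) 0 :=
      Real.continuousAt_rpow_const 0 p (Or.inr hp.le)
    have h0 : (0:ℝ) ^ (p:ℝ) = 0 := Real.zero_rpow (ne_of_gt hp)
    have := hc.tendsto.mono_left (nhdsWithin_le_nhds (s := Ioi (0:ℝ)))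
    rwa [h0] at this
  -- squeeze tool on Ioc 0 δ
  have hsqueeze : ∀ (f g : ℝ → ℝ), Tendsto g (𝓝[>] (0:ℝ)) (𝓝 0) →
      (∀ r ∈ Ioc (0:ℝ) δ, 0 ≤ f r) → (∀ r ∈ Ioc (0:ℝ) δ, f r ≤ g r) →
      Tendsto f (𝓝[>] (0:ℝ)) (𝓝 0) := by
    intro f g hg h0 h1
    have hmem : Ioc (0:ℝ) δ ∈ 𝓝[>] (0:ℝ) := Ioc_mem_nhdsGT_of_mem ⟨le_rfl, hδpos⟩
    refine tendsto_of_tendsto_of_tendsto_of_le_of_le' tendsto_const_nhds hg ?_ ?_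
    · filter_upwards [hmem] with r hr; exact h0 r hr
    · filter_upwards [hmem] with r hr; exact h1 r hr
  -- (c4) : u ≤ C r^{8/5}
  set C : ℝ := (1 - w δ) * δ ^ (-(8/5) : ℝ) with hCdef
  have hC0 : 0 ≤ C := by
    have := (horbit δ hδpos).2.2.1
    have := Real.rpow_pos_of_pos hδpos (-(8/5) : ℝ)
    nlinarith
  have hDratio : ∀ x ∈ Ioc (0:ℝ) δ, HasDerivAt (fun r => (1 - w r) * r ^ (-(8/5) : ℝ))
      ((0 - deriv w x) * x ^ (-(8/5):ℝ) + (1 - w x) * ((-(8/5)) * x ^ ((-(8/5)) - 1 : ℝ))) x := by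
    intro x hx
    exact ((hasDerivAt_const x (1:ℝ)).sub (hwdiff x hx.1)).mul
      (Real.hasDerivAt_rpow_const (Or.inl (ne_of_gt hx.1)))
  have hratio : MonotoneOn (fun r => (1 - w r) * r ^ (-(8/5) : ℝ)) (Ioc 0 δ) := by
    apply monotoneOn_of_deriv_nonneg (convex_Ioc 0 δ)
    · exact fun x hx => (hDratio x hx).continuousAt.continuousWithinAt
    · intro x hx
      rw [interior_Ioc] at hx
      exact (hDratio x (Ioo_subset_Ioc_self hx)).differentiableAt.differentiableWithinAt
    · intro x hx
      rw [interior_Ioc] at hx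
      have hx' := Ioo_subset_Ioc_self hx
      rw [(hDratio x hx').deriv]
      have hx0 : (0:ℝ) < x := hx'.1
      have he1 : x ^ ((-(8/5)) - 1 : ℝ) = x ^ (-(13/5) : ℝ) := by norm_num
      have he2 : x ^ (-(8/5):ℝ) = x ^ (-(13/5):ℝ) * x := by
        calc x ^ (-(8/5):ℝ) = x ^ ((-(13/5)) + 1 : ℝ) := by norm_num
          _ = x ^ (-(13/5):ℝ) * x ^ (1:ℝ) := Real.rpow_add hx0 _ _
          _ = x ^ (-(13/5):ℝ) * x := by rw [Real.rpow_one]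
      rw [he1, he2]
      have hZx := hZ x hx'
      have hp : (0:ℝ) ≤ x ^ (-(13/5):ℝ) := (Real.rpow_pos_of_pos hx0 _).le
      have : (0 - deriv w x) * (x ^ (-(13/5):ℝ) * x)
          + (1 - w x) * ((-(8/5)) * x ^ (-(13/5):ℝ))
          = x ^ (-(13/5):ℝ) * ((-(x * deriv w x)) - (8/5)*(1 - w x)) := by ring
      rw [this]
      exact mul_nonneg hp hZx
  have hu85 : ∀ r ∈ Ioc (0:ℝ) δ, 1 - w r ≤ C * r ^ ((8/5):ℝ) := by
    intro r hr
    have h := hratio hr ⟨hδpos, le_rfl⟩ hr.2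
    have hrpos : (0:ℝ) < r := hr.1
    have hpow : (0:ℝ) < r ^ ((8/5):ℝ) := Real.rpow_pos_of_pos hrpos _
    have h2 := mul_le_mul_of_nonneg_right h hpow.le
    have hcancel : r ^ (-(8/5):ℝ) * r ^ ((8/5):ℝ) = 1 := by
      rw [← Real.rpow_add hrpos]
      norm_num
    calc 1 - w r = (1 - w r) * (r ^ (-(8/5):ℝ) * r ^ ((8/5):ℝ)) := by rw [hcancel]; ring
      _ = ((1 - w r) * r ^ (-(8/5):ℝ)) * r ^ ((8/5):ℝ) := by ring
      _ ≤ C * r ^ ((8/5):ℝ) := h2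
  -- (c5) : q ≤ C1 r^{3/5}
  set C1 : ℝ := (200/99) * C with hC1def
  have hC10 : 0 ≤ C1 := by positivity
  have hq35 : ∀ r ∈ Ioc (0:ℝ) δ, -(deriv w r) ≤ C1 * r ^ ((3/5):ℝ) := by
    intro r hr
    have hrpos : (0:ℝ) < r := hr.1
    have h1 := hsq r hr
    have h2 := hu85 r hr
    have hsplit : r ^ ((8/5):ℝ) = r ^ ((3/5):ℝ) * r := by
      calc r ^ ((8/5):ℝ) = r ^ ((3/5) + 1 : ℝ) := by norm_num
        _ = r ^ ((3/5):ℝ) * r ^ (1:ℝ) := Real.rpow_add hrpos _ _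
        _ = r ^ ((3/5):ℝ) * r := by rw [Real.rpow_one]
    have h3 : r * -(deriv w r) ≤ (C1 * r ^ ((3/5):ℝ)) * r := by
      calc r * -(deriv w r) ≤ (200/99)*(1 - w r) := h1
        _ ≤ (200/99) * (C * r ^ ((8/5):ℝ)) := by linarith
        _ = (C1 * r ^ ((3/5):ℝ)) * r := by rw [hC1def, hsplit]; ring
    have h4 : (-(deriv w r)) * r ≤ (C1 * r ^ ((3/5):ℝ)) * r := by linarith [h3]
    exact le_of_mul_le_mul_right (by linarith [h4]) hrpos
  -- (c6) : m ≤ K r^{11/5}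
  set K : ℝ := 4*C^2 + 2*C1^2 with hKdef
  have hK0 : 0 ≤ K := by positivity
  have hm225 : ∀ r ∈ Ioc (0:ℝ) δ, r * (1 - A r) ≤ K * r ^ ((11/5):ℝ) := by
    have key := nonneg_of_hasDerivAt_nonneg
      (f := fun s => K * s ^ ((11/5):ℝ) - s * (1 - A s))
      (f' := fun s => K * ((11/5) * s ^ ((11/5) - 1 : ℝ))
        - ((1 - (w s)^2)^2 / s^2 + 2 * (deriv w s)^2 * A s)) (b := δ) ?_ ?_ ?_
    · intro r hr
      have h := key r hr
      linarith
    · intro s hs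
      exact ((Real.hasDerivAt_rpow_const (p := ((11/5):ℝ))
        (Or.inl (ne_of_gt hs.1))).const_mul K).sub (hmderiv s hs.1)
    · intro s hs
      have hs0 : (0:ℝ) < s := hs.1
      have he1 : s ^ ((11/5) - 1 : ℝ) = s ^ ((6/5):ℝ) := by norm_num
      rw [he1]
      -- bound m' := (1-w²)²/s² + 2 w'² A by K s^{6/5}
      have hwlt1 := (horbit s hs0).2.2.1
      have hwgt := (horbit s hs0).2.1
      have hAle := hAle1 s hs0
      have hA0 := (horbit s hs0).1
      have hb1 : 0 ≤ 1 - (w s)^2 := by nlinarith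
      have hb2 : 1 - (w s)^2 ≤ 2*(1 - w s) := by nlinarith
      have hb3 : 1 - (w s)^2 ≤ 2*C*s ^ ((8/5):ℝ) := by
        have := hu85 s hs
        linarith
      have hsq1 : (1 - (w s)^2)^2 ≤ (2*C*s ^ ((8/5):ℝ))^2 := pow_le_pow_left₀ hb1 hb3 2
      have hpow16 : (s ^ ((8/5):ℝ))^2 = s ^ ((16/5):ℝ) := by
        rw [← Real.rpow_natCast (s ^ ((8/5):ℝ)) 2, ← Real.rpow_mul hs0.le]
        norm_num
      have hpow6 : (s ^ ((3/5):ℝ))^2 = s ^ ((6/5):ℝ) := by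
        rw [← Real.rpow_natCast (s ^ ((3/5):ℝ)) 2, ← Real.rpow_mul hs0.le]
        norm_num
      have hsplit16 : s ^ ((16/5):ℝ) = s ^ ((6/5):ℝ) * s^2 := by
        calc s ^ ((16/5):ℝ) = s ^ ((6/5) + 2 : ℝ) := by norm_num
          _ = s ^ ((6/5):ℝ) * s ^ ((2:ℕ):ℝ) := by
              rw [Real.rpow_add hs0]
              norm_num
          _ = s ^ ((6/5):ℝ) * s^2 := by rw [Real.rpow_natCast]
      have hd1 : (1 - (w s)^2)^2 / s^2 ≤ 4*C^2 * s ^ ((6/5):ℝ) := by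
        rw [div_le_iff₀ (by positivity : (0:ℝ) < s^2)]
        calc (1 - (w s)^2)^2 ≤ (2*C*s ^ ((8/5):ℝ))^2 := hsq1
          _ = 4*C^2 * s ^ ((16/5):ℝ) := by rw [← hpow16]; ring
          _ = 4*C^2 * s ^ ((6/5):ℝ) * s^2 := by rw [hsplit16]; ring
      have hq := hq35 s hs
      have hqpos : 0 ≤ -(deriv w s) := by linarith [(horbit s hs0).2.2.2]
      have hsq2 : (deriv w s)^2 ≤ C1^2 * s ^ ((6/5):ℝ) := by
        have h := pow_le_pow_left₀ hqpos hq 2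
        calc (deriv w s)^2 = (-(deriv w s))^2 := by ring
          _ ≤ (C1 * s ^ ((3/5):ℝ))^2 := h
          _ = C1^2 * (s ^ ((3/5):ℝ))^2 := by ring
          _ = C1^2 * s ^ ((6/5):ℝ) := by rw [hpow6]
      have hd2 : 2 * (deriv w s)^2 * A s ≤ 2*C1^2 * s ^ ((6/5):ℝ) := by
        have h1 : 2 * (deriv w s)^2 * A s ≤ 2 * (deriv w s)^2 * 1 := by
          apply mul_le_mul_of_nonneg_left hAle (by positivity)
        calc 2 * (deriv w s)^2 * A s ≤ 2 * (deriv w s)^2 := by linarith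
          _ ≤ 2*(C1^2 * s ^ ((6/5):ℝ)) := by linarith
          _ = 2*C1^2 * s ^ ((6/5):ℝ) := by ring
      rw [hKdef]
      have hsp : (0:ℝ) ≤ s ^ ((6/5):ℝ) := (Real.rpow_pos_of_pos hs0 _).le
      nlinarith [hd1, hd2, hsp]
    · have h1 := (hrpow0 ((11/5):ℝ) (by norm_num)).const_mul K
      have h2 := hm0
      have := h1.sub h2
      simpa using this
  -- limits at 0+
  have l1 : Tendsto (fun r => 2*(deriv w r)^2/r) (𝓝[>] (0:ℝ)) (𝓝 0) := by
    apply hsqueeze _ (fun r => 2*C1^2 * r ^ ((1/5):ℝ))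
      (by simpa using (hrpow0 ((1/5):ℝ) (by norm_num)).const_mul (2*C1^2))
    · intro r hr
      have : (0:ℝ) < r := hr.1
      positivity
    · intro r hr
      have hrpos : (0:ℝ) < r := hr.1
      have hq := hq35 r hr
      have hqpos : 0 ≤ -(deriv w r) := by linarith [(horbit r hrpos).2.2.2]
      have hpow6 : (r ^ ((3/5):ℝ))^2 = r ^ ((6/5):ℝ) := by
        rw [← Real.rpow_natCast (r ^ ((3/5):ℝ)) 2, ← Real.rpow_mul hrpos.le]
        norm_num
      have hsq2 : (deriv w r)^2 ≤ C1^2 * r ^ ((6/5):ℝ) := by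
        have h := pow_le_pow_left₀ hqpos hq 2
        calc (deriv w r)^2 = (-(deriv w r))^2 := by ring
          _ ≤ (C1 * r ^ ((3/5):ℝ))^2 := h
          _ = C1^2 * (r ^ ((3/5):ℝ))^2 := by ring
          _ = C1^2 * r ^ ((6/5):ℝ) := by rw [hpow6]
      have hsplit : r ^ ((6/5):ℝ) = r ^ ((1/5):ℝ) * r := by
        calc r ^ ((6/5):ℝ) = r ^ ((1/5) + 1 : ℝ) := by norm_num
          _ = r ^ ((1/5):ℝ) * r ^ (1:ℝ) := Real.rpow_add hrpos _ _
          _ = r ^ ((1/5):ℝ) * r := by rw [Real.rpow_one]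
      rw [div_le_iff₀ hrpos]
      calc 2*(deriv w r)^2 ≤ 2*(C1^2 * r ^ ((6/5):ℝ)) := by linarith
        _ = 2*C1^2 * r ^ ((1/5):ℝ) * r := by rw [hsplit]; ring
  have hA'bnd : ∀ r ∈ Ioc (0:ℝ) δ,
      -(K * r ^ ((1/5):ℝ)) ≤ deriv A r ∧ deriv A r ≤ K * r ^ ((1/5):ℝ) := by
    intro r hr
    have hrpos : (0:ℝ) < r := hr.1
    have e2 := heq2' r hrpos
    have hwlt1 := (horbit r hrpos).2.2.1
    have hwgt := (horbit r hrpos).2.1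
    have hAle := hAle1 r hrpos
    have hA0 := (horbit r hrpos).1
    have hb1 : 0 ≤ 1 - (w r)^2 := by nlinarith
    have hb3 : 1 - (w r)^2 ≤ 2*C*r ^ ((8/5):ℝ) := by
      have := hu85 r hr
      nlinarith
    have hpow16 : (r ^ ((8/5):ℝ))^2 = r ^ ((16/5):ℝ) := by
      rw [← Real.rpow_natCast (r ^ ((8/5):ℝ)) 2, ← Real.rpow_mul hrpos.le]
      norm_num
    have hsq1 : (1 - (w r)^2)^2 ≤ 4*C^2 * r ^ ((16/5):ℝ) := by
      have h := pow_le_pow_left₀ hb1 hb3 2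
      nlinarith [hpow16]
    have hqpos : 0 ≤ -(deriv w r) := by linarith [(horbit r hrpos).2.2.2]
    have hpow6 : (r ^ ((3/5):ℝ))^2 = r ^ ((6/5):ℝ) := by
      rw [← Real.rpow_natCast (r ^ ((3/5):ℝ)) 2, ← Real.rpow_mul hrpos.le]
      norm_num
    have hsq2 : (deriv w r)^2 ≤ C1^2 * r ^ ((6/5):ℝ) := by
      have h := pow_le_pow_left₀ hqpos (hq35 r hr) 2
      calc (deriv w r)^2 = (-(deriv w r))^2 := by ring
        _ ≤ (C1 * r ^ ((3/5):ℝ))^2 := h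
        _ = C1^2 * (r ^ ((3/5):ℝ))^2 := by ring
        _ = C1^2 * r ^ ((6/5):ℝ) := by rw [hpow6]
    have hm := hm225 r hr
    have hsplit16 : r ^ ((16/5):ℝ) = r ^ ((1/5):ℝ) * r^3 := by
      calc r ^ ((16/5):ℝ) = r ^ ((1/5) + 3 : ℝ) := by norm_num
        _ = r ^ ((1/5):ℝ) * r ^ ((3:ℕ):ℝ) := by
            rw [Real.rpow_add hrpos]
            norm_num
        _ = r ^ ((1/5):ℝ) * r^3 := by rw [Real.rpow_natCast]
    have hsplit6 : r ^ ((6/5):ℝ) * r^2 = r ^ ((1/5):ℝ) * r^3 := by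
      calc r ^ ((6/5):ℝ) * r^2 = r ^ ((6/5):ℝ) * r ^ ((2:ℕ):ℝ) := by rw [Real.rpow_natCast]
        _ = r ^ ((6/5) + 2:ℝ) := (Real.rpow_add hrpos _ _).symm
        _ = r ^ ((16/5):ℝ) := by norm_num
        _ = r ^ ((1/5):ℝ) * r^3 := hsplit16
    have hsplit11 : r ^ ((11/5):ℝ) * r = r ^ ((1/5):ℝ) * r^3 := by
      calc r ^ ((11/5):ℝ) * r = r ^ ((11/5):ℝ) * r ^ (1:ℝ) := by rw [Real.rpow_one]
        _ = r ^ ((11/5) + 1:ℝ) := (Real.rpow_add hrpos _ _).symm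
        _ = r ^ ((16/5):ℝ) := by norm_num
        _ = r ^ ((1/5):ℝ) * r^3 := hsplit16
    have hr3 : (0:ℝ) < r^3 := by positivity
    have hr3A : r^3 * deriv A r
        = r^2*(1 - A r) - (1 - (w r)^2)^2 - 2*r^2*(deriv w r)^2*A r := by
      linear_combination e2
    have t1 : (1 - (w r)^2)^2 ≤ 4*C^2*(r ^ ((1/5):ℝ) * r^3) := by
      rw [← hsplit16]
      linarith [hsq1]
    have t2 : 2*r^2*(deriv w r)^2*A r ≤ 2*C1^2*(r ^ ((1/5):ℝ) * r^3) := by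
      have h1 : (deriv w r)^2 * A r ≤ C1^2 * r ^ ((6/5):ℝ) := by
        nlinarith [hsq2, sq_nonneg (deriv w r)]
      calc 2*r^2*(deriv w r)^2*A r = 2*r^2*((deriv w r)^2*A r) := by ring
        _ ≤ 2*r^2*(C1^2 * r ^ ((6/5):ℝ)) := by
            apply mul_le_mul_of_nonneg_left h1 (by positivity)
        _ = 2*C1^2*(r ^ ((6/5):ℝ) * r^2) := by ring
        _ = 2*C1^2*(r ^ ((1/5):ℝ) * r^3) := by rw [hsplit6]
    have tm : r^2*(1 - A r) ≤ K*(r ^ ((1/5):ℝ) * r^3) := by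
      calc r^2*(1 - A r) = r * (r*(1 - A r)) := by ring
        _ ≤ r * (K * r ^ ((11/5):ℝ)) := by
            apply mul_le_mul_of_nonneg_left hm hrpos.le
        _ = K * (r ^ ((11/5):ℝ) * r) := by ring
        _ ≤ K*(r ^ ((1/5):ℝ) * r^3) := by rw [hsplit11]
    have tnn1 : 0 ≤ (1 - (w r)^2)^2 := sq_nonneg _
    have tnn2 : 0 ≤ 2*r^2*(deriv w r)^2*A r := by positivity
    have tnn3 : 0 ≤ r^2*(1 - A r) := by nlinarith
    constructor
    · have low : (-(K * r ^ ((1/5):ℝ))) * r^3 ≤ deriv A r * r^3 := by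
        rw [hKdef]
        nlinarith [hr3A, t1, t2, tnn3]
      exact le_of_mul_le_mul_right low hr3
    · have upp : deriv A r * r^3 ≤ (K * r ^ ((1/5):ℝ)) * r^3 := by
        nlinarith [hr3A, tm, tnn1, tnn2]
      exact le_of_mul_le_mul_right upp hr3
  have l2 : Tendsto (deriv A) (𝓝[>] (0:ℝ)) (𝓝 0) := by
    have hmem : Ioc (0:ℝ) δ ∈ 𝓝[>] (0:ℝ) := Ioc_mem_nhdsGT_of_mem ⟨le_rfl, hδpos⟩
    have hK1 := (hrpow0 ((1/5):ℝ) (by norm_num)).const_mul K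
    refine tendsto_of_tendsto_of_tendsto_of_le_of_le' (f := deriv A)
      (g := fun r => -(K * r ^ ((1/5):ℝ))) (h := fun r => K * r ^ ((1/5):ℝ))
      (by simpa using hK1.neg) (by simpa using hK1) ?_ ?_
    · filter_upwards [hmem] with r hr
      exact (hA'bnd r hr).1
    · filter_upwards [hmem] with r hr
      exact (hA'bnd r hr).2
  -- pointwise bound for g = 2 w'^2 / r near 0
  have hgbnd : ∀ r ∈ Ioc (0:ℝ) δ, 2*(deriv w r)^2/r ≤ 2*C1^2 * r ^ ((1/5):ℝ) := by
    intro r hr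
    have hrpos : (0:ℝ) < r := hr.1
    have hq := hq35 r hr
    have hqpos : 0 ≤ -(deriv w r) := by linarith [(horbit r hrpos).2.2.2]
    have hpow6 : (r ^ ((3/5):ℝ))^2 = r ^ ((6/5):ℝ) := by
      rw [← Real.rpow_natCast (r ^ ((3/5):ℝ)) 2, ← Real.rpow_mul hrpos.le]
      norm_num
    have hsq2 : (deriv w r)^2 ≤ C1^2 * r ^ ((6/5):ℝ) := by
      have h := pow_le_pow_left₀ hqpos hq 2
      calc (deriv w r)^2 = (-(deriv w r))^2 := by ring
        _ ≤ (C1 * r ^ ((3/5):ℝ))^2 := h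
        _ = C1^2 * (r ^ ((3/5):ℝ))^2 := by ring
        _ = C1^2 * r ^ ((6/5):ℝ) := by rw [hpow6]
    have hsplit : r ^ ((6/5):ℝ) = r ^ ((1/5):ℝ) * r := by
      calc r ^ ((6/5):ℝ) = r ^ ((1/5) + 1 : ℝ) := by norm_num
        _ = r ^ ((1/5):ℝ) * r ^ (1:ℝ) := Real.rpow_add hrpos _ _
        _ = r ^ ((1/5):ℝ) * r := by rw [Real.rpow_one]
    rw [div_le_iff₀ hrpos]
    calc 2*(deriv w r)^2 ≤ 2*(C1^2 * r ^ ((6/5):ℝ)) := by linarith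
      _ = 2*C1^2 * r ^ ((1/5):ℝ) * r := by rw [hsplit]; ring
  -- choose N for the far region
  obtain ⟨N0, hN0⟩ := Metric.tendsto_atTop.mp hw' 1 one_pos
  set N : ℝ := max N0 (δ + 1) with hNdef
  have hNpos : (0:ℝ) < N := lt_of_lt_of_le (by linarith) (le_max_right _ _)
  have hNδ : δ ≤ N := le_trans (by linarith) (le_max_right _ _)
  have hq1 : ∀ s : ℝ, N ≤ s → -(deriv w s) ≤ 1 := by
    intro s hsN
    have h := hN0 s (le_trans (le_max_left _ _) hsN)
    rw [Real.dist_eq, sub_zero] at h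
    have := abs_le.mp h.le
    linarith [this.1]
  -- continuity of g on Ioi 0
  have hgcont : ContinuousOn (fun s : ℝ => 2*(deriv w s)^2/s) (Ioi 0) :=
    (continuousOn_const.mul (hw'cont.pow 2)).div continuousOn_id
      (fun x hx => ne_of_gt hx)
  -- integrability of g on (0, δ]
  have hint1 : IntegrableOn (fun s : ℝ => 2*(deriv w s)^2/s) (Ioc 0 δ) := by
    apply Integrable.mono' (g := fun _ => 2*C1^2*δ ^ ((1/5):ℝ))
      (integrableOn_const measure_Ioc_lt_top.ne)
      ((hgcont.mono (fun x hx => hx.1)).aestronglyMeasurable measurableSet_Ioc)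
    filter_upwards [ae_restrict_mem measurableSet_Ioc] with x hx
    have hx0 : (0:ℝ) < x := hx.1
    rw [Real.norm_eq_abs, abs_of_nonneg (by positivity)]
    calc 2*(deriv w x)^2/x ≤ 2*C1^2 * x ^ ((1/5):ℝ) := hgbnd x hx
        _ ≤ 2*C1^2 * δ ^ ((1/5):ℝ) := by
            have := Real.rpow_le_rpow hx.1.le hx.2 (by norm_num : (0:ℝ) ≤ 1/5)
            nlinarith [this]
  -- integrability of g on (δ, N]
  have hint2 : IntegrableOn (fun s : ℝ => 2*(deriv w s)^2/s) (Ioc δ N) := by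
    have h : IntegrableOn (fun s : ℝ => 2*(deriv w s)^2/s) (Icc δ N) volume :=
      (hgcont.mono (fun x (hx : x ∈ Icc δ N) =>
        lt_of_lt_of_le hδpos hx.1)).integrableOn_Icc
    exact h.mono_set Ioc_subset_Icc_self
  -- integrability of g on (N, ∞)
  have hint3 : IntegrableOn (fun s : ℝ => 2*(deriv w s)^2/s) (Ioi N) := by
    apply MeasureTheory.integrableOn_Ioi_of_intervalIntegral_norm_bounded (4/N) N
      (b := fun i : ℝ => i) (l := atTop)
    · intro i
      have h : IntegrableOn (fun s : ℝ => 2*(deriv w s)^2/s) (Icc N i) volume :=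
        (hgcont.mono (fun x (hx : x ∈ Icc N i) =>
          lt_of_lt_of_le hNpos hx.1)).integrableOn_Icc
      exact h.mono_set Ioc_subset_Icc_self
    · exact tendsto_id
    · filter_upwards [eventually_ge_atTop N] with i hi
      have hIccpos : ∀ x ∈ Icc N i, (0:ℝ) < x := fun x hx => lt_of_lt_of_le hNpos hx.1
      have hiw : IntervalIntegrable (deriv w) volume N i := by
        apply ContinuousOn.intervalIntegrable
        rw [uIcc_of_le hi]
        exact hw'cont.mono (fun x hx => hIccpos x hx)
      have hiq2 : IntervalIntegrable (fun x => (deriv w x)^2) volume N i := by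
        apply ContinuousOn.intervalIntegrable
        rw [uIcc_of_le hi]
        exact (hw'cont.mono (fun x hx => hIccpos x hx)).pow 2
      have hig : IntervalIntegrable (fun x : ℝ => 2*(deriv w x)^2/x) volume N i := by
        apply ContinuousOn.intervalIntegrable
        rw [uIcc_of_le hi]
        exact hgcont.mono (fun x hx => hIccpos x hx)
      have hFTC : ∫ x in N..i, deriv w x = w i - w N := by
        apply intervalIntegral.integral_deriv_eq_sub
        · intro x hx
          rw [uIcc_of_le hi] at hx
          exact (hwdiff x (hIccpos x hx)).differentiableAt
        · exact hiw
      have hq2le : ∫ x in N..i, (deriv w x)^2 ≤ ∫ x in N..i, (-(deriv w x)) := by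
        apply intervalIntegral.integral_mono_on hi hiq2 hiw.neg
        intro x hx
        have h1 := hq1 x hx.1
        have h2 : deriv w x < 0 := (horbit x (hIccpos x hx)).2.2.2
        show (deriv w x)^2 ≤ -(deriv w x)
        nlinarith
      have hwbd : ∫ x in N..i, (-(deriv w x)) ≤ 2 := by
        rw [intervalIntegral.integral_neg, hFTC]
        have h1 : w i ≥ -1 := ((horbit i (lt_of_lt_of_le hNpos hi)).2.1).le
        have h2 : w N ≤ 1 := ((horbit N hNpos).2.2.1).le
        linarith
      have hnorm : ∫ x in N..i, ‖2*(deriv w x)^2/x‖ = ∫ x in N..i, 2*(deriv w x)^2/x := by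
        apply intervalIntegral.integral_congr
        intro x hx
        rw [uIcc_of_le hi] at hx
        have hx0 : (0:ℝ) < x := hIccpos x hx
        show ‖2*(deriv w x)^2/x‖ = 2*(deriv w x)^2/x
        rw [Real.norm_eq_abs, abs_of_nonneg (by positivity)]
      rw [hnorm]
      have hgle : ∫ x in N..i, 2*(deriv w x)^2/x ≤ ∫ x in N..i, (2/N)*(deriv w x)^2 := by
        apply intervalIntegral.integral_mono_on hi hig (hiq2.const_mul (2/N))
        intro x hx
        have hx0 := hIccpos x hx
        rw [div_le_iff₀ hx0]
        have h2 : (2/N)*(deriv w x)^2 * x ≥ (2/N)*(deriv w x)^2 * N := by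
          apply mul_le_mul_of_nonneg_left hx.1 (by positivity)
        have h3 : (2/N)*(deriv w x)^2 * N = 2*(deriv w x)^2 := by
          field_simp
        linarith
      have hconst : ∫ x in N..i, (2/N)*(deriv w x)^2 = (2/N) * ∫ x in N..i, (deriv w x)^2 :=
        intervalIntegral.integral_const_mul _ _
      calc ∫ x in N..i, 2*(deriv w x)^2/x ≤ (2/N) * ∫ x in N..i, (deriv w x)^2 := by
            rw [← hconst]; exact hgle
        _ ≤ (2/N) * 2 := by
            apply mul_le_mul_of_nonneg_left (le_trans hq2le hwbd) (by positivity)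
        _ = 4/N := by ring
  have hint : IntegrableOn (fun s : ℝ => 2*(deriv w s)^2/s) (Ioi 0) := by
    have h12 := hint1.union hint2
    rw [Ioc_union_Ioc_eq_Ioc hδpos.le hNδ] at h12
    have h := h12.union hint3
    rwa [Ioc_union_Ioi_eq_Ioi hNpos.le] at h
  -- interval integrability from 0
  have hFint : ∀ r : ℝ, 0 < r → IntervalIntegrable (fun s : ℝ => 2*(deriv w s)^2/s) volume 0 r := by
    intro r hr
    rw [intervalIntegrable_iff_integrableOn_Ioc_of_le hr.le]
    exact hint.mono_set (fun x hx => hx.1)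
  have hFderiv : ∀ r ∈ Ioi (0:ℝ), HasDerivAt (Ffun w) (2*(deriv w r)^2/r) r := by
    intro r hr
    exact intervalIntegral.integral_hasDerivAt_right (hFint r hr)
      (hgcont.stronglyMeasurableAtFilter hopen r hr)
      (hgcont.continuousAt (hopen.mem_nhds hr))
  have hTpos : ∀ r : ℝ, 0 < r → 0 < Tfun w A r := by
    intro r hr
    have hA0 := (horbit r hr).1
    have hsA : 0 < Real.sqrt (A r) := Real.sqrt_pos.mpr hA0
    exact div_pos (Real.exp_pos _) hsA
  have hTderiv : ∀ r ∈ Ioi (0:ℝ), HasDerivAt (Tfun w A)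
      (Tfun w A r * (-(2*(deriv w r)^2/r) - deriv A r/(2*A r))) r := by
    intro r hr
    have hA0 : 0 < A r := (horbit r hr).1
    have hsA : 0 < Real.sqrt (A r) := Real.sqrt_pos.mpr hA0
    have h1 : HasDerivAt (fun y => (∫ s in Ioi (0:ℝ), 2*(deriv w s)^2/s) - Ffun w y)
        (-(2*(deriv w r)^2/r)) r := by
      refine ((hasDerivAt_const r (∫ s in Ioi (0:ℝ), 2*(deriv w s)^2/s)).sub (hFderiv r hr)).congr_deriv ?_
      ring
    have h2 := h1.exp
    have h3 : HasDerivAt (fun y => Real.sqrt (A y)) (1/(2*Real.sqrt (A r)) * deriv A r) r :=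
      (Real.hasDerivAt_sqrt (ne_of_gt hA0)).comp r (hAdiff r hr)
    have h4 := h2.div h3 (ne_of_gt hsA)
    have e := Talg (Real.exp ((∫ s in Ioi (0:ℝ), 2*(deriv w s)^2/s) - Ffun w r))
      (Real.sqrt (A r)) (deriv A r) (2*(deriv w r)^2/r) hsA
    rw [Real.sq_sqrt hA0.le] at e
    unfold Tfun
    refine h4.congr_deriv ?_
    rw [Real.sq_sqrt hA0.le]
    linear_combination -e
  have hderivT : ∀ r ∈ Ioi (0:ℝ), deriv (Tfun w A) r
      = Tfun w A r * (-(2*(deriv w r)^2/r) - deriv A r/(2*A r)) :=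
    fun r hr => (hTderiv r hr).deriv
  have hTcont : ContinuousOn (Tfun w A) (Ioi 0) :=
    fun r hr => (hTderiv r hr).continuousAt.continuousWithinAt
  have hTcd : ContDiffOn ℝ 1 (Tfun w A) (Ioi 0) := by
    rw [show (1 : WithTop ℕ∞) = 0 + 1 from rfl, contDiffOn_succ_iff_deriv_of_isOpen hopen]
    refine ⟨fun r hr => (hTderiv r hr).differentiableAt.differentiableWithinAt, ?_, ?_⟩
    · intro h
      exact absurd h (by simp)
    · rw [contDiffOn_zero]
      have hcf : ContinuousOn
          (fun r => Tfun w A r * (-(2*(deriv w r)^2/r) - deriv A r/(2*A r))) (Ioi 0) := by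
        apply hTcont.mul
        apply ContinuousOn.sub hgcont.neg
        apply ContinuousOn.div hA'cont (continuousOn_const.mul hAcont)
        intro x hx
        have := (horbit x hx).1
        have : (0:ℝ) < 2*A x := by linarith
        exact ne_of_gt this
      exact hcf.congr (fun r hr => hderivT r hr)
  have hODE : ∀ r ∈ Ioi (0:ℝ), 2*r*A r*deriv (Tfun w A) r
      + (2*(deriv w r)^2*A r + Phi w A r/r)*(Tfun w A r) = 0 := by
    intro r hr
    rw [hderivT r hr]
    have hA0 : (0:ℝ) < A r := (horbit r hr).1
    have hbr : 2*r*A r*(-(2*(deriv w r)^2/r) - deriv A r/(2*A r))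
        + (2*(deriv w r)^2*A r + Phi w A r/r) = 0 := by
      have hr0 : (r:ℝ) ≠ 0 := ne_of_gt hr
      have hA0' : A r ≠ 0 := ne_of_gt hA0
      have e2 := heq2 r hr
      simp only [Phi]
      field_simp
      field_simp at e2
      linear_combination (-1:ℝ) * e2
    linear_combination (Tfun w A r) * hbr
  -- limit at infinity
  have hFH : Tendsto (Ffun w) atTop (𝓝 (∫ s in Ioi (0:ℝ), 2*(deriv w s)^2/s)) := by
    have h := MeasureTheory.intervalIntegral_tendsto_integral_Ioi 0 hint tendsto_id
    exact h
  have hT1 : Tendsto (Tfun w A) atTop (𝓝 1) := by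
    have h0 : Tendsto (fun r => (∫ s in Ioi (0:ℝ), 2*(deriv w s)^2/s) - Ffun w r)
        atTop (𝓝 0) := by
      have hh := (tendsto_const_nhds (x := (∫ s in Ioi (0:ℝ), 2*(deriv w s)^2/s))).sub hFH
      rwa [sub_self] at hh
    have h1 : Tendsto (fun r => Real.exp ((∫ s in Ioi (0:ℝ), 2*(deriv w s)^2/s) - Ffun w r))
        atTop (𝓝 1) := by
      have := (Real.continuous_exp.tendsto 0).comp h0
      simpa [Function.comp_def] using this
    have h2 : Tendsto (fun r => Real.sqrt (A r)) atTop (𝓝 1) := by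
      have := (Real.continuous_sqrt.tendsto 1).comp hA
      simpa [Function.comp_def] using this
    have := h1.div h2 one_ne_zero
    simp only [div_one] at this
    exact this
  -- limit of F at 0+
  have hF0 : Tendsto (Ffun w) (𝓝[>] (0:ℝ)) (𝓝 0) := by
    apply hsqueeze (Ffun w) (fun r => (2*C1^2*δ ^ ((1/5):ℝ)) * r)
      (by simpa using hid0.const_mul (2*C1^2*δ ^ ((1/5):ℝ)))
    · intro r hr
      unfold Ffun
      apply intervalIntegral.integral_nonneg hr.1.le
      intro u hu
      exact div_nonneg (by positivity) hu.1
    · intro r hr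
      have hB0 : (0:ℝ) ≤ 2*C1^2*δ ^ ((1/5):ℝ) := by positivity
      have hbnd : ∀ x ∈ Icc (0:ℝ) r, 2*(deriv w x)^2/x ≤ 2*C1^2*δ ^ ((1/5):ℝ) := by
        intro x hx
        rcases eq_or_lt_of_le hx.1 with h0|h0
        · rw [← h0, div_zero]
          exact hB0
        · have hxδ : x ∈ Ioc (0:ℝ) δ := ⟨h0, le_trans hx.2 hr.2⟩
          calc 2*(deriv w x)^2/x ≤ 2*C1^2 * x ^ ((1/5):ℝ) := hgbnd x hxδ
            _ ≤ 2*C1^2 * δ ^ ((1/5):ℝ) := by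
                have := Real.rpow_le_rpow h0.le hxδ.2 (by norm_num : (0:ℝ) ≤ 1/5)
                nlinarith [this]
      have h := intervalIntegral.integral_mono_on hr.1.le (hFint r hr.1)
        intervalIntegrable_const hbnd
      have h2 : (∫ _x in (0:ℝ)..r, (2*C1^2*δ ^ ((1/5):ℝ))) = (2*C1^2*δ ^ ((1/5):ℝ)) * r := by
        rw [intervalIntegral.integral_const, smul_eq_mul]
        ring
      unfold Ffun
      calc (∫ s in (0:ℝ)..r, 2*(deriv w s)^2/s)
          ≤ ∫ _x in (0:ℝ)..r, (2*C1^2*δ ^ ((1/5):ℝ)) := h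
        _ = (2*C1^2*δ ^ ((1/5):ℝ)) * r := h2
  have hT0 : Tendsto (Tfun w A) (𝓝[>] (0:ℝ))
      (𝓝 (Real.exp (∫ s in Ioi (0:ℝ), 2*(deriv w s)^2/s))) := by
    have h0 : Tendsto (fun r => (∫ s in Ioi (0:ℝ), 2*(deriv w s)^2/s) - Ffun w r)
        (𝓝[>] (0:ℝ)) (𝓝 (∫ s in Ioi (0:ℝ), 2*(deriv w s)^2/s)) := by
      simpa using (tendsto_const_nhds (x := (∫ s in Ioi (0:ℝ), 2*(deriv w s)^2/s))).sub hF0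
    have h1 := (Real.continuous_exp.tendsto _).comp h0
    have h2 : Tendsto (fun r => Real.sqrt (A r)) (𝓝[>] (0:ℝ)) (𝓝 1) := by
      have := (Real.continuous_sqrt.tendsto 1).comp hreg3
      simpa [Function.comp_def] using this
    have := h1.div h2 one_ne_zero
    simp only [div_one] at this
    exact this
  have hA'A : Tendsto (fun r => deriv A r/(2*A r)) (𝓝[>] (0:ℝ)) (𝓝 0) := by
    have h2 : Tendsto (fun r => 2*A r) (𝓝[>] (0:ℝ)) (𝓝 2) := by
      simpa using hreg3.const_mul (2:ℝ)
    have := l2.div h2 (two_ne_zero)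
    simpa [Pi.div_def] using this
  have hdT0 : Tendsto (deriv (Tfun w A)) (𝓝[>] (0:ℝ)) (𝓝 0) := by
    have hTd0 : Tendsto (fun r => Tfun w A r * (-(2*(deriv w r)^2/r) - deriv A r/(2*A r)))
        (𝓝[>] (0:ℝ)) (𝓝 0) := by
      have := hT0.mul ((l1.neg).sub hA'A)
      simpa using this
    apply hTd0.congr'
    filter_upwards [self_mem_nhdsWithin] with r hr
    exact (hderivT r hr).symm
  exact ⟨Tfun w A, hTpos, hTcd, hODE, hT1, hdT0, hA⟩
end
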